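/- arXiv:2003.02560 — 12 statements merged into one kernel-verified Lean document; each statement's English description precedes it below -/
import Mathlib

section
/- If a ring homomorphism R → S has the prime extension property and W is a multiplicative subset of R, then the induced map W⁻¹R → W⁻¹S (localization of both rings at W, where S is localized at the image of W) also has the prime extension property. -/
/-- A ring homomorphism has the prime extension property if every prime ideal of the
source extends to a prime ideal or the unit ideal of the target. -/
def PrimeExtensionProperty {R S : Type*} [CommRing R] [CommRing S] (f : R →+* S) : Prop :=
  ∀ P : Ideal R, P.IsPrime → (P.map f).IsPrime ∨ P.map f = ⊤

theorem pep_localization {R S : Type*} [CommRing R] [CommRing S] (f : R →+* S)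
    (hf : PrimeExtensionProperty f) (W : Submonoid R) :
    PrimeExtensionProperty
      (IsLocalization.map (Localization (W.map f)) f (Submonoid.le_comap_map W) :
        Localization W →+* Localization (W.map f)) := by
  intro Q hQ
  set g : Localization W →+* Localization (W.map f) :=
    IsLocalization.map (Localization (W.map f)) f (Submonoid.le_comap_map W)
  set P : Ideal R := Q.comap (algebraMap R (Localization W)) with hP
  have hPprime : P.IsPrime := ((IsLocalization.isPrime_iff_isPrime_disjoint W _ Q).1 hQ).1
  have hQeq : Q = P.map (algebraMap R (Localization W)) :=
    (IsLocalization.map_comap W _ Q).symm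
  have key : Q.map g = (P.map f).map (algebraMap S (Localization (W.map f))) := by
    rw [hQeq, Ideal.map_map, IsLocalization.map_comp, ← Ideal.map_map]
  rw [key]
  rcases hf P hPprime with hp | htop
  · by_cases hd : Disjoint ((W.map f : Submonoid S) : Set S) ((P.map f : Ideal S) : Set S)
    · exact Or.inl (IsLocalization.isPrime_of_isPrime_disjoint (W.map f) _ _ hp hd)
    · right
      rw [Set.not_disjoint_iff] at hd
      obtain ⟨s, hsW, hsP⟩ := hd
      exact Ideal.eq_top_of_isUnit_mem _ (Ideal.mem_map_of_mem _ hsP)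
        (IsLocalization.map_units (Localization (W.map f)) ⟨s, hsW⟩)
  · right
    rw [htop, Ideal.map_top]
end

section
/- Let R → S be a ring homomorphism and let 𝔄 be an ideal of R consisting of nilpotent elements. Then R → S has the prime extension property if and only if R/𝔄 → S/𝔄S has the prime extension property. -/
theorem pep_iff_pep_quotient_nilpotents {R S : Type*} [CommRing R] [CommRing S]
    (f : R →+* S) (𝔄 : Ideal R) (h𝔄 : 𝔄 ≤ nilradical R) :
    PrimeExtensionProperty f ↔
      PrimeExtensionProperty (Ideal.quotientMap (𝔄.map f) f Ideal.le_comap_map :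
        R ⧸ 𝔄 →+* S ⧸ 𝔄.map f) := by
  set g := Ideal.quotientMap (𝔄.map f) f Ideal.le_comap_map with hg
  have hcomm : ∀ P : Ideal R, (P.map (Ideal.Quotient.mk 𝔄)).map g
      = (P.map f).map (Ideal.Quotient.mk (𝔄.map f)) := by
    intro P
    rw [Ideal.map_map, Ideal.map_map, hg, Ideal.quotientMap_comp_mk]
  have hsurj : Function.Surjective (Ideal.Quotient.mk 𝔄) := Ideal.Quotient.mk_surjective
  have hsurj' : Function.Surjective (Ideal.Quotient.mk (𝔄.map f)) :=
    Ideal.Quotient.mk_surjective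
  constructor
  · intro hpep Q hQ
    set P := Q.comap (Ideal.Quotient.mk 𝔄) with hP
    have hPprime : P.IsPrime := hQ.comap _
    have hQP : P.map (Ideal.Quotient.mk 𝔄) = Q :=
      Ideal.map_comap_of_surjective _ hsurj Q
    have h𝔄P : 𝔄 ≤ P := by
      intro x hx
      simp [hP, Ideal.Quotient.eq_zero_iff_mem.2 hx]
    rcases hpep P hPprime with h | h
    · left
      rw [← hQP, hcomm]
      have : 𝔄.map f ≤ P.map f := Ideal.map_mono h𝔄P
      have := Ideal.map_isPrime_of_surjective (f := Ideal.Quotient.mk (𝔄.map f)) hsurj'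
        (I := P.map f) (by rwa [Ideal.mk_ker])
      exact this
    · right
      rw [← hQP, hcomm, h, Ideal.map_top]
  · intro hpep P hPprime
    have h𝔄P : 𝔄 ≤ P := h𝔄.trans (nilradical_le_prime P)
    have hQprime : (P.map (Ideal.Quotient.mk 𝔄)).IsPrime :=
      Ideal.map_isPrime_of_surjective hsurj (by rwa [Ideal.mk_ker])
    have hle : 𝔄.map f ≤ P.map f := Ideal.map_mono h𝔄P
    have hcm : ((P.map f).map (Ideal.Quotient.mk (𝔄.map f))).comap
        (Ideal.Quotient.mk (𝔄.map f)) = P.map f := by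
      rw [Ideal.comap_map_of_surjective _ hsurj', ← RingHom.ker_eq_comap_bot, Ideal.mk_ker, sup_eq_left.2 hle]
    rcases hpep _ hQprime with h | h
    · left
      rw [hcomm] at h
      rw [← hcm]
      exact h.comap _
    · right
      rw [hcomm] at h
      rw [← hcm, h, Ideal.comap_top]
end

section
/- Let R → S be a ring homomorphism. Then R/PR → S/PS has the prime extension property for every minimal prime P of R if and only if R → S has the prime extension property. -/
theorem pep_iff_pep_quotient_minimal_primes {R S : Type*} [CommRing R] [CommRing S]
    (f : R →+* S) :
    (∀ P ∈ minimalPrimes R,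
      PrimeExtensionProperty (Ideal.quotientMap (P.map f) f Ideal.le_comap_map :
        R ⧸ P →+* S ⧸ P.map f)) ↔
    PrimeExtensionProperty f := by
  constructor
  · intro h Q hQ
    obtain ⟨P, hPmin, hPQ⟩ := Ideal.exists_minimalPrimes_le (I := (⊥ : Ideal R))
      (J := Q) bot_le
    have hPprime : P.IsPrime := hPmin.1.1
    -- Q.map mk is prime in R/P
    have hker : RingHom.ker (Ideal.Quotient.mk P) ≤ Q := by
      rw [Ideal.mk_ker]; exact hPQ
    have hmkprime : (Q.map (Ideal.Quotient.mk P)).IsPrime :=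
      Ideal.map_isPrime_of_surjective Ideal.Quotient.mk_surjective hker
    have := h P hPmin (Q.map (Ideal.Quotient.mk P)) hmkprime
    have key : (Q.map (Ideal.Quotient.mk P)).map
        (Ideal.quotientMap (P.map f) f Ideal.le_comap_map) =
        (Q.map f).map (Ideal.Quotient.mk (P.map f)) := by
      rw [Ideal.map_map, Ideal.quotientMap_comp_mk, ← Ideal.map_map]
    rw [key] at this
    have hkerS : RingHom.ker (Ideal.Quotient.mk (P.map f)) ≤ Q.map f := by
      rw [Ideal.mk_ker]; exact Ideal.map_mono hPQ
    have hcomap : ((Q.map f).map (Ideal.Quotient.mk (P.map f))).comap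
        (Ideal.Quotient.mk (P.map f)) = Q.map f := by
      rw [Ideal.comap_map_of_surjective _ Ideal.Quotient.mk_surjective,
        ← RingHom.ker_eq_comap_bot]
      exact sup_eq_left.mpr hkerS
    rcases this with hp | ht
    · left
      rw [← hcomap]
      exact hp.comap _
    · right
      rw [← hcomap, ht, Ideal.comap_top]
  · intro h P hPmin Q' hQ'
    have hPprime : P.IsPrime := hPmin.1.1
    set Q : Ideal R := Q'.comap (Ideal.Quotient.mk P) with hQdef
    have hQprime : Q.IsPrime := hQ'.comap _
    have hPQ : P ≤ Q := by
      intro x hx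
      simp [hQdef, Ideal.Quotient.eq_zero_iff_mem.mpr hx]
    have hQ'eq : Q' = Q.map (Ideal.Quotient.mk P) :=
      (Ideal.map_comap_of_surjective _ Ideal.Quotient.mk_surjective Q').symm
    have key : Q'.map (Ideal.quotientMap (P.map f) f Ideal.le_comap_map) =
        (Q.map f).map (Ideal.Quotient.mk (P.map f)) := by
      rw [hQ'eq, Ideal.map_map, Ideal.quotientMap_comp_mk, ← Ideal.map_map]
    rw [key]
    rcases h Q hQprime with hp | ht
    · left
      have hkerS : RingHom.ker (Ideal.Quotient.mk (P.map f)) ≤ Q.map f := by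
        rw [Ideal.mk_ker]; exact Ideal.map_mono hPQ
      exact Ideal.map_isPrime_of_surjective Ideal.Quotient.mk_surjective hkerS
    · right
      rw [ht, Ideal.map_top]
end

section
/- If R is a Noetherian commutative ring and P is a prime ideal of R, then the extension of P to the formal power series ring R⟦X⟧ is a prime ideal. -/
open PowerSeries

lemma map_C_eq_ker {R : Type*} [CommRing R] [IsNoetherianRing R] (P : Ideal R) :
    P.map (PowerSeries.C : R →+* PowerSeries R)
      = RingHom.ker (PowerSeries.map (Ideal.Quotient.mk P)) := by
  apply le_antisymm
  · rw [Ideal.map_le_iff_le_comap]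
    intro p hp
    simp only [Ideal.mem_comap, RingHom.mem_ker]
    ext n
    simp [PowerSeries.coeff_C]
    intro h
    subst h
    exact Ideal.Quotient.eq_zero_iff_mem.2 hp
  · intro f hf
    have hcoeff : ∀ n, PowerSeries.coeff n f ∈ P := by
      intro n
      have : PowerSeries.coeff n (PowerSeries.map (Ideal.Quotient.mk P) f) = 0 := by
        rw [RingHom.mem_ker] at hf; rw [hf]; simp
      rw [PowerSeries.coeff_map] at this
      exact Ideal.Quotient.eq_zero_iff_mem.1 this
    obtain ⟨s, hs⟩ := (isNoetherianRing_iff_ideal_fg R).1 ‹_› P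
    have hrep : ∀ n, ∃ c : R → R, ∑ g ∈ s, c g • g = PowerSeries.coeff n f := by
      intro n
      obtain ⟨c, -, hc⟩ := Submodule.mem_span_finset.1 (by rw [show Submodule.span R (↑s : Set R) = P from hs]; exact hcoeff n)
      exact ⟨c, hc⟩
    choose c hc using hrep
    have : f = ∑ g ∈ s, (PowerSeries.C g) * PowerSeries.mk (fun n => c n g) := by
      ext n
      rw [map_sum]
      simp only [PowerSeries.coeff_C_mul, PowerSeries.coeff_mk]
      rw [← hc n]
      simp [mul_comm, smul_eq_mul]
    rw [this]
    refine Ideal.sum_mem _ fun g hg => Ideal.mul_mem_right _ _ ?_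
    exact Ideal.mem_map_of_mem _ (by rw [← hs]; exact Ideal.subset_span hg)

theorem map_powerSeries_C_isPrime {R : Type*} [CommRing R] [IsNoetherianRing R]
    (P : Ideal R) (hP : P.IsPrime) :
    (P.map (PowerSeries.C : R →+* PowerSeries R)).IsPrime := by
  rw [map_C_eq_ker]
  haveI : IsDomain (R ⧸ P) := Ideal.Quotient.isDomain P
  exact RingHom.ker_isPrime _
end

section
/- Let R → S be a ring homomorphism such that S/𝔄ᵢS is flat over R/𝔄ᵢ for ideals 𝔄₁,…,𝔄_{h-1} of R, and let 𝔄_h be any further ideal. Then the intersection of the extensions ⋂ᵢ (𝔄ᵢ S) equals the extension of the intersection (⋂ᵢ 𝔄ᵢ)S. -/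
open TensorProduct LinearMap Function

set_option maxHeartbeats 1000000 in
set_option synthInstance.maxHeartbeats 1000000 in
theorem key_inf_map {R S : Type*} [CommRing R] [CommRing S] [Algebra R S] (A B : Ideal R)
    [Algebra (R ⧸ A) (S ⧸ A.map (algebraMap R S))]
    [IsScalarTower R (R ⧸ A) (S ⧸ A.map (algebraMap R S))]
    [Module.Flat (R ⧸ A) (S ⧸ A.map (algebraMap R S))] :
    A.map (algebraMap R S) ⊓ B.map (algebraMap R S) = (A ⊓ B).map (algebraMap R S) := by
  refine le_antisymm ?_ (le_inf (Ideal.map_mono inf_le_left) (Ideal.map_mono inf_le_right))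
  set J : Ideal (R ⧸ A) := B.map (Ideal.Quotient.mk A) with hJ
  -- the multiplication map `B ⊗ S → S`
  set μ : B ⊗[R] S →ₗ[R] S := TensorProduct.lift ((LinearMap.lsmul R S).comp B.subtype) with hμ
  -- the quotient map `S → T` as an `R`-linear map
  set q : S →ₗ[R] (S ⧸ A.map (algebraMap R S)) := (Ideal.Quotient.mkₐ R (A.map (algebraMap R S))).toLinearMap with hq
  -- the projection `B → J`
  set pJ : B →ₗ[R] J :=
    { toFun := fun b => ⟨Ideal.Quotient.mk A (b : R), Ideal.mem_map_of_mem _ b.2⟩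
      map_add' := fun x y => Subtype.ext (by simp)
      map_smul' := fun r x => Subtype.ext (by
        simp only [RingHom.id_apply, SetLike.val_smul, SetLike.val_smul_of_tower, Submodule.coe_smul_of_tower, smul_eq_mul, map_mul,
          ← Ideal.Quotient.algebraMap_eq, ← Algebra.smul_def]) } with hpJ
  have hpJ_surj : Surjective pJ := by
    rintro ⟨y, hy⟩
    obtain ⟨b, hb, rfl⟩ := (Ideal.mem_map_iff_of_surjective _ Ideal.Quotient.mk_surjective).mp hy
    exact ⟨⟨b, hb⟩, rfl⟩
  have hq_surj : Surjective q := Ideal.Quotient.mk_surjective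
  set Kb : Submodule R B := Submodule.comap B.subtype (A.restrictScalars R) with hKb
  have hexact1 : Exact Kb.subtype pJ := by
    rw [LinearMap.exact_iff, Submodule.range_subtype]
    ext b
    simp only [hpJ, LinearMap.mem_ker, LinearMap.coe_mk, AddHom.coe_mk, hKb,
      Submodule.mem_comap, Submodule.coe_subtype, Submodule.restrictScalars_mem]
    rw [Subtype.ext_iff]
    exact Ideal.Quotient.eq_zero_iff_mem
  have hexact2 : Exact ((A.map (algebraMap R S)).restrictScalars R).subtype q := by
    rw [LinearMap.exact_iff, Submodule.range_subtype]
    ext s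
    simp only [LinearMap.mem_ker, hq, AlgHom.toLinearMap_apply, Ideal.Quotient.mkₐ_eq_mk,
      Submodule.restrictScalars_mem]
    exact Ideal.Quotient.eq_zero_iff_mem
  set π : B ⊗[R] S →ₗ[R] J ⊗[R] (S ⧸ A.map (algebraMap R S)) := TensorProduct.map pJ q with hπ
  have hker : ker π = range (lTensor B ((A.map (algebraMap R S)).restrictScalars R).subtype)
      ⊔ range (rTensor S Kb.subtype) :=
    TensorProduct.map_ker hexact1 hpJ_surj hexact2 hq_surj
  -- compatible scalar actions
  haveI hcs : TensorProduct.CompatibleSMul R (R ⧸ A) (↥J) (S ⧸ A.map (algebraMap R S)) := by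
    constructor
    intro c m n
    obtain ⟨r, rfl⟩ := Ideal.Quotient.mk_surjective c
    rw [← Ideal.Quotient.algebraMap_eq, algebraMap_smul, algebraMap_smul, smul_tmul]
  set m : J ⊗[R] (S ⧸ A.map (algebraMap R S)) →ₗ[R] J ⊗[R ⧸ A] (S ⧸ A.map (algebraMap R S)) :=
    TensorProduct.mapOfCompatibleSMul (R ⧸ A) R R (↥J) (S ⧸ A.map (algebraMap R S)) with hm
  set m' : J ⊗[R ⧸ A] (S ⧸ A.map (algebraMap R S)) →ₗ[R ⧸ A] J ⊗[R] (S ⧸ A.map (algebraMap R S)) :=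
    TensorProduct.mapOfCompatibleSMul R (R ⧸ A) (R ⧸ A) (↥J) (S ⧸ A.map (algebraMap R S)) with hm'
  have hm_inj : Injective m := by
    have hinv : ∀ x, m' (m x) = x := by
      intro x
      induction x using TensorProduct.induction_on with
      | zero => rw [LinearMap.map_zero, LinearMap.map_zero]
      | tmul a b =>
          rw [hm, TensorProduct.mapOfCompatibleSMul_tmul, hm',
            TensorProduct.mapOfCompatibleSMul_tmul]
      | add u v hu hv => rw [LinearMap.map_add, LinearMap.map_add, hu, hv]
    intro a b hab
    have := congrArg m' hab
    rwa [hinv, hinv] at this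
  set θ : J ⊗[R ⧸ A] (S ⧸ A.map (algebraMap R S)) →ₗ[R ⧸ A] (S ⧸ A.map (algebraMap R S)) :=
    TensorProduct.lift ((LinearMap.lsmul (R ⧸ A) (S ⧸ A.map (algebraMap R S))).comp J.subtype)
    with hθdef
  have hθ : Injective θ := by
    have h1 : Injective (rTensor (S ⧸ A.map (algebraMap R S)) J.subtype) :=
      (Module.Flat.iff_rTensor_injective' (R := R ⧸ A) (M := S ⧸ A.map (algebraMap R S))).mp inferInstance J
    have h2 : θ = (TensorProduct.lid (R ⧸ A) (S ⧸ A.map (algebraMap R S))).toLinearMap.comp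
        (rTensor (S ⧸ A.map (algebraMap R S)) J.subtype) := by
      apply TensorProduct.ext'
      intro x y
      simp [hθdef]
    rw [h2]
    exact (TensorProduct.lid (R ⧸ A) (S ⧸ A.map (algebraMap R S))).injective.comp h1
  -- the key commutative square
  have hsquare : (θ.restrictScalars R) ∘ₗ (m ∘ₗ π) = q ∘ₗ μ := by
    apply TensorProduct.ext'
    intro b s
    simp only [LinearMap.coe_comp, Function.comp_apply, LinearMap.coe_restrictScalars]
    have h3 : π (b ⊗ₜ s) = (pJ b) ⊗ₜ[R] (q s) := by
      rw [hπ, TensorProduct.map_tmul]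
    rw [h3, hm, TensorProduct.mapOfCompatibleSMul_tmul]
    have h4 : θ ((pJ b) ⊗ₜ[R ⧸ A] (q s)) = (Ideal.Quotient.mk A (b : R)) • (q s) := by
      rw [hθdef, TensorProduct.lift.tmul]
      simp only [LinearMap.coe_comp, Function.comp_apply, Submodule.coe_subtype,
        LinearMap.lsmul_apply, hpJ, LinearMap.coe_mk, AddHom.coe_mk]
    rw [h4, hμ]
    simp only [TensorProduct.lift.tmul, LinearMap.coe_comp, Function.comp_apply,
      Submodule.coe_subtype, LinearMap.lsmul_apply, map_smul]
    rw [← Ideal.Quotient.algebraMap_eq, algebraMap_smul]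
  -- every element of `B.map (algebraMap R S)` lifts along `μ`
  have hrange : ∀ x ∈ B.map (algebraMap R S), x ∈ range μ := by
    have hclosed : ∀ (s : S) (t : B ⊗[R] S), s • μ t ∈ range μ := by
      intro s t
      induction t using TensorProduct.induction_on with
      | zero =>
          rw [map_zero, smul_zero]
          exact zero_mem _
      | tmul b u =>
          refine ⟨b ⊗ₜ (s • u), ?_⟩
          simp [hμ, smul_comm]
      | add u v hu hv =>
          rw [map_add, smul_add]
          exact add_mem hu hv
    intro x hx
    refine Submodule.span_induction ?_ ?_ ?_ ?_ hx
    · rintro y ⟨b, hb, rfl⟩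
      refine ⟨⟨b, hb⟩ ⊗ₜ 1, ?_⟩
      simp [hμ, Algebra.smul_def]
    · exact zero_mem _
    · intro y z _ _ hy hz; exact add_mem hy hz
    · intro s y _ hy
      obtain ⟨t, rfl⟩ := hy
      exact hclosed s t
  -- now the main argument
  intro x hx
  obtain ⟨hxA, hxB⟩ := Submodule.mem_inf.mp hx
  obtain ⟨t, ht⟩ := hrange x hxB
  have hqx : q x = 0 := by
    simp only [hq, AlgHom.toLinearMap_apply, Ideal.Quotient.mkₐ_eq_mk]
    exact Ideal.Quotient.eq_zero_iff_mem.mpr hxA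
  have hπt : π t = 0 := by
    have h0 : θ (m (π t)) = 0 := by
      have := congrFun (congrArg (fun (F : _ →ₗ[R] _) => (F : _ → _)) hsquare) t
      simp only [LinearMap.coe_comp, Function.comp_apply, LinearMap.coe_restrictScalars] at this
      rw [this, ht, hqx]
    have h1 : m (π t) = 0 := hθ (by rw [h0, LinearMap.map_zero])
    exact hm_inj (by rw [h1, LinearMap.map_zero])
  have htmem : t ∈ ker π := hπt
  rw [hker, Submodule.mem_sup] at htmem
  obtain ⟨u, hu, v, hv, huv⟩ := htmem
  obtain ⟨u', rfl⟩ := hu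
  obtain ⟨v', rfl⟩ := hv
  have claim1 : ∀ w, μ (lTensor B ((A.map (algebraMap R S)).restrictScalars R).subtype w) ∈ (A ⊓ B).map (algebraMap R S) := by
    intro w
    induction w using TensorProduct.induction_on with
    | zero =>
        rw [map_zero, map_zero]
        exact zero_mem _
    | tmul b s =>
        have h5 : μ (lTensor B ((A.map (algebraMap R S)).restrictScalars R).subtype (b ⊗ₜ s))
            = algebraMap R S (b : R) * (s : S) := by
          simp [hμ, Algebra.smul_def]
        rw [h5]
        have hmem : algebraMap R S (b : R) * (s : S) ∈ (B * A).map (algebraMap R S) := by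
          rw [Ideal.map_mul]
          exact Ideal.mul_mem_mul (Ideal.mem_map_of_mem (algebraMap R S) b.2) s.2
        exact Ideal.map_mono (le_trans Ideal.mul_le_inf (inf_comm B A).le) hmem
    | add w1 w2 h1 h2 =>
        rw [map_add, map_add]
        exact add_mem h1 h2
  have claim2 : ∀ w, μ (rTensor S Kb.subtype w) ∈ (A ⊓ B).map (algebraMap R S) := by
    intro w
    induction w using TensorProduct.induction_on with
    | zero =>
        rw [map_zero, map_zero]
        exact zero_mem _
    | tmul k s =>
        have h6 : μ (rTensor S Kb.subtype (k ⊗ₜ s)) = algebraMap R S ((k : B) : R) * s := by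
          simp [hμ, Algebra.smul_def]
        rw [h6]
        have hmem : ((k : B) : R) ∈ A ⊓ B := ⟨k.2, (k : B).2⟩
        exact Ideal.mul_mem_right s _ (Ideal.mem_map_of_mem (algebraMap R S) hmem)
    | add w1 w2 h1 h2 =>
        rw [map_add, map_add]
        exact add_mem h1 h2
  have hxx : x = μ (lTensor B ((A.map (algebraMap R S)).restrictScalars R).subtype u')
      + μ (rTensor S Kb.subtype v') := by
    rw [← map_add, huv, ht]
  rw [hxx]
  exact add_mem (claim1 u') (claim2 v')

private theorem iInf_fin_succ_aux {α : Type*} [CompleteLattice α] {m : ℕ}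
    (g : Fin (m + 1) → α) : (⨅ i, g i) = g 0 ⊓ ⨅ i : Fin m, g i.succ := by
  apply le_antisymm
  · exact le_inf (iInf_le _ 0) (le_iInf fun i => iInf_le _ i.succ)
  · refine le_iInf fun i => ?_
    induction i using Fin.cases with
    | zero => exact inf_le_left
    | succ j => exact le_trans inf_le_right (iInf_le _ j)

theorem iInf_map_of_flat_quotients {R S : Type*} [CommRing R] [CommRing S]
    (f : R →+* S) (h : ℕ) (𝔄 : Fin h → Ideal R)
    (hflat : ∀ i : Fin h, (i : ℕ) + 1 < h →
      letI : Algebra (R ⧸ 𝔄 i) (S ⧸ (𝔄 i).map f) :=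
        (Ideal.quotientMap ((𝔄 i).map f) f Ideal.le_comap_map).toAlgebra
      Module.Flat (R ⧸ 𝔄 i) (S ⧸ (𝔄 i).map f)) :
    (⨅ i, (𝔄 i).map f) = (⨅ i, 𝔄 i).map f := by
  induction h with
  | zero => simp [iInf_of_empty, Ideal.map_top]
  | succ n ih =>
      cases n with
      | zero => simp
      | succ m =>
          have hkey : ((𝔄 0).map f) ⊓ ((⨅ i : Fin (m + 1), 𝔄 i.succ).map f)
              = ((𝔄 0) ⊓ ⨅ i : Fin (m + 1), 𝔄 i.succ).map f := by
            letI : Algebra R S := f.toAlgebra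
            letI : Algebra (R ⧸ 𝔄 0) (S ⧸ (𝔄 0).map (algebraMap R S)) :=
              (Ideal.quotientMap ((𝔄 0).map f) f Ideal.le_comap_map).toAlgebra
            haveI : IsScalarTower R (R ⧸ 𝔄 0) (S ⧸ (𝔄 0).map (algebraMap R S)) :=
              IsScalarTower.of_algebraMap_eq fun r => rfl
            haveI : Module.Flat (R ⧸ 𝔄 0) (S ⧸ (𝔄 0).map (algebraMap R S)) :=
              hflat 0 (by simp)
            have h0 := key_inf_map (R := R) (S := S) (𝔄 0) (⨅ i : Fin (m + 1), 𝔄 i.succ)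
            rwa [RingHom.algebraMap_toAlgebra] at h0
          rw [iInf_fin_succ_aux (fun i => (𝔄 i).map f), iInf_fin_succ_aux 𝔄,
            ih (fun i => 𝔄 i.succ) (fun i hi => hflat i.succ (by
              simpa using Nat.succ_lt_succ hi)), hkey]
end

section
/- Let A be an ℕ-graded commutative ring whose degree-zero piece A₀ is a local ring with maximal ideal 𝔪₀, and let 𝔄 = 𝔪₀ + A_{>0} be the unique maximal homogeneous ideal (where A_{>0} is the ideal generated by elements of positive degree). Then every element of A not in 𝔄 is a nonzerodivisor on A and on every ℤ-graded A-module. -/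
open DirectSum

lemma aux_nzd {A : Type*} [CommRing A] (𝒜 : ℕ → AddSubgroup A) [GradedRing 𝒜]
    [IsLocalRing (𝒜 0)]
    (a : A)
    (ha : (DirectSum.decompose 𝒜 a 0 : 𝒜 0) ∉ IsLocalRing.maximalIdeal (𝒜 0))
    {ι : Type*} [DecidableEq ι] [LinearOrder ι]
    (M : Type*) [AddCommGroup M] [Module A M]
    (ℳ : ι → AddSubgroup M) [DirectSum.Decomposition ℳ]
    (g : ℕ → ι → ι)
    (hg0 : ∀ j, g 0 j = j)
    (hg : ∀ i j j₀, j₀ ≤ j → g i j = j₀ → i = 0)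
    (hsmul : ∀ (i : ℕ) (j : ι), ∀ x ∈ 𝒜 i, ∀ m ∈ ℳ j, x • m ∈ ℳ (g i j)) :
    ∀ m : M, a • m = 0 → m = 0 := by
  classical
  have hu : IsUnit (DirectSum.decompose 𝒜 a 0 : 𝒜 0) := by
    rwa [IsLocalRing.notMem_maximalIdeal] at ha
  obtain ⟨b, hb⟩ : ∃ b : 𝒜 0, (DirectSum.decompose 𝒜 a 0) * b = 1 := by
    obtain ⟨u, hu⟩ := hu
    exact ⟨(↑u⁻¹ : 𝒜 0), by rw [← hu]; exact u.mul_inv⟩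
  intro m hm
  by_contra hm0
  -- support of decompose m
  set dm := DirectSum.decompose ℳ m with hdm
  have hsupp : dm.support.Nonempty := by
    rw [Finset.nonempty_iff_ne_empty, Ne, DFinsupp.support_eq_empty]
    intro h
    exact hm0 (by simpa [hdm, h] using congrArg (DirectSum.decomposeAddEquiv ℳ).symm h)
  set j₀ := dm.support.min' hsupp with hj₀
  have hj₀mem : j₀ ∈ dm.support := dm.support.min'_mem hsupp
  -- the additive map extracting degree j₀
  set φ : M →+ M :=
    ((ℳ j₀).subtype.comp (DFinsupp.evalAddMonoidHom j₀)).comp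
      (DirectSum.decomposeAddEquiv ℳ).toAddMonoidHom with hφdef
  have hφ : ∀ (k : ι) (x : M), x ∈ ℳ k → φ x = if k = j₀ then x else 0 := by
    have happ : ∀ x : M, φ x = ((DirectSum.decompose ℳ x) j₀ : M) := fun x => rfl
    intro k x hx
    rw [happ]
    by_cases h : k = j₀
    · rw [if_pos h]; subst h; exact DirectSum.decompose_of_mem_same ℳ hx
    · rw [if_neg h]; exact DirectSum.decompose_of_mem_ne ℳ hx h
  -- expand a and m into sums of components
  set da := DirectSum.decompose 𝒜 a with hda
  have hmsum : m = ∑ j ∈ dm.support, ((dm j : ℳ j) : M) :=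
    (DirectSum.sum_support_decompose ℳ m).symm
  have hasum : a = ∑ i ∈ da.support, ((da i : 𝒜 i) : A) :=
    (DirectSum.sum_support_decompose 𝒜 a).symm
  have key : φ (a • m) = ((da 0 : 𝒜 0) : A) • ((dm j₀ : ℳ j₀) : M) := by
    conv_lhs => rw [hasum, hmsum]
    rw [Finset.sum_smul]
    simp only [Finset.smul_sum]
    rw [map_sum]
    have step : ∀ i ∈ da.support, φ (∑ j ∈ dm.support, ((da i : A) • ((dm j : ℳ j) : M)))
        = if i = 0 then ((da 0 : 𝒜 0) : A) • ((dm j₀ : ℳ j₀) : M) else 0 := by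
      intro i _
      rw [map_sum]
      have term : ∀ j ∈ dm.support,
          φ ((da i : A) • ((dm j : ℳ j) : M))
            = if i = 0 ∧ j = j₀ then ((da 0 : 𝒜 0) : A) • ((dm j₀ : ℳ j₀) : M) else 0 := by
        intro j hj
        have hmem : (da i : A) • ((dm j : ℳ j) : M) ∈ ℳ (g i j) :=
          hsmul i j _ (da i).2 _ (dm j).2
        rw [hφ _ _ hmem]
        by_cases hgij : g i j = j₀
        · have hi0 : i = 0 := hg i j j₀ (dm.support.min'_le j hj) hgij
          have hjj : j = j₀ := by rw [hi0, hg0] at hgij; exact hgij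
          subst hi0; subst hjj; simp [hg0]
        · have : ¬ (i = 0 ∧ j = j₀) := by
            rintro ⟨hi0, hjj⟩; exact hgij (by rw [hi0, hjj, hg0])
          simp [hgij, this]
      rw [Finset.sum_congr rfl term]
      by_cases hi0 : i = 0
      · simp only [hi0, true_and]
        rw [Finset.sum_ite_eq' dm.support j₀ (fun _ => ((da 0 : 𝒜 0) : A) • ((dm j₀ : ℳ j₀) : M))]
        simp [hj₀mem]
      · simp [hi0]
    rw [Finset.sum_congr rfl step]
    have h0mem : (0 : ℕ) ∈ da.support := by
      rw [DFinsupp.mem_support_iff]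
      intro h
      apply hu.ne_zero
      exact_mod_cast h
    rw [Finset.sum_ite_eq' da.support 0 (fun _ => ((da 0 : 𝒜 0) : A) • ((dm j₀ : ℳ j₀) : M))]
    simp [h0mem]
  rw [hm, map_zero] at key
  -- now kill dm j₀ using the inverse b
  have : ((dm j₀ : ℳ j₀) : M) = 0 := by
    have h1 : ((1 : 𝒜 0) : A) • ((dm j₀ : ℳ j₀) : M) = 0 := by
      rw [← hb]
      have : (((DirectSum.decompose 𝒜 a 0) * b : 𝒜 0) : A)
          = ((b : A)) * ((da 0 : 𝒜 0) : A) := by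
        push_cast [mul_comm]; rfl
      rw [this, mul_smul, ← key, smul_zero]
    simpa using h1
  exact (DFinsupp.mem_support_iff.mp hj₀mem) (Subtype.ext this)

/-- Every element of an `ℕ`-graded ring `A` with `A₀` (quasi)local that lies outside the
maximal homogeneous ideal `𝔪₀ + A_{>0}` (equivalently, whose degree-zero component is not
in `𝔪₀`) is a nonzerodivisor on `A` and on every `ℤ`-graded `A`-module. -/
theorem nonzerodivisor_of_not_mem_max_homogeneous_ideal
    {A : Type*} [CommRing A] (𝒜 : ℕ → AddSubgroup A) [GradedRing 𝒜]
    [IsLocalRing (𝒜 0)]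
    (a : A)
    (ha : (DirectSum.decompose 𝒜 a 0 : 𝒜 0) ∉ IsLocalRing.maximalIdeal (𝒜 0))
    (M : Type*) [AddCommGroup M] [Module A M]
    (ℳ : ℤ → AddSubgroup M) [DirectSum.Decomposition ℳ]
    (hsmul : ∀ (i : ℕ) (j : ℤ), ∀ x ∈ 𝒜 i, ∀ m ∈ ℳ j, x • m ∈ ℳ ((i : ℤ) + j)) :
    (∀ b : A, a * b = 0 → b = 0) ∧ (∀ m : M, a • m = 0 → m = 0) := by
  constructor
  · intro b hb
    refine aux_nzd 𝒜 a ha A 𝒜 (fun i j => i + j) (fun j => by simp)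
      (fun i j j₀ h₁ h₂ => by omega) ?_ b (by rwa [smul_eq_mul])
    intro i j x hx m hm
    exact SetLike.mul_mem_graded hx hm
  · exact aux_nzd 𝒜 a ha M ℳ (fun i j => (i : ℤ) + j) (fun j => by simp)
      (fun i j j₀ h₁ h₂ => by omega) hsmul
end

section
/- Let (R,𝔪) → (S,𝔫) be a local homomorphism of local (quasilocal) rings that has the stable prime extension property. Then the kernel of R → S is contained in the nilradical of R. In particular, if R is reduced, then R → S is injective. -/
/-- A ring homomorphism has the stable prime extension property if for every `n`, the induced
map on polynomial rings in `n` variables has the prime extension property. -/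
def StablePrimeExtensionProperty {R S : Type*} [CommRing R] [CommRing S] (f : R →+* S) : Prop :=
  ∀ n : ℕ, PrimeExtensionProperty (MvPolynomial.map (σ := Fin n) f)

open MvPolynomial in
theorem aux_ker_le_nilradical {R S : Type*} [CommRing R] [CommRing S]
    [IsLocalRing R] [IsLocalRing S] (f : R →+* S) [IsLocalHom f]
    (hf : StablePrimeExtensionProperty f) :
    RingHom.ker f ≤ nilradical R := by
  intro a ha
  rw [RingHom.mem_ker] at ha
  by_contra hnil
  rw [nilradical_eq_sInf, Ideal.mem_sInf] at hnil
  push_neg at hnil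
  obtain ⟨p, hp, hap⟩ := hnil
  haveI : p.IsPrime := hp
  set π : R →+* R ⧸ p := Ideal.Quotient.mk p with hπdef
  have hpa2 : π a ≠ 0 := by
    simpa [hπdef, Ideal.Quotient.eq_zero_iff_mem] using hap
  haveI : IsDomain (LaurentPolynomial (R ⧸ p)) := NoZeroDivisors.to_isDomain _
  set v : Fin 2 → LaurentPolynomial (R ⧸ p) :=
    ![LaurentPolynomial.T 1, LaurentPolynomial.C (π a) * LaurentPolynomial.T (-1)] with hv
  set φ : MvPolynomial (Fin 2) R →+* LaurentPolynomial (R ⧸ p) :=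
    MvPolynomial.eval₂Hom (LaurentPolynomial.C.comp π) v with hφdef
  -- the coefficient formula for φ
  have hcoeff : ∀ g : MvPolynomial (Fin 2) R, ∀ d : ℤ,
      (φ g).coeff d = ∑ m ∈ g.support,
        if ((m 0 : ℤ) - m 1 = d) then π (coeff m g) * (π a) ^ (m 1) else 0 := by
    intro g d
    have h1 : φ g = ∑ m ∈ g.support,
        AddMonoidAlgebra.single ((m 0 : ℤ) - (m 1 : ℤ)) (π (coeff m g) * (π a) ^ (m 1)) := by
      rw [hφdef, coe_eval₂Hom, eval₂_eq']
      refine Finset.sum_congr rfl fun m _ => ?_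
      rw [Fin.prod_univ_two]
      simp only [hv, Matrix.cons_val_zero, Matrix.cons_val_one, Matrix.head_cons,
        RingHom.coe_comp, Function.comp_apply]
      rw [mul_pow, LaurentPolynomial.T_pow, LaurentPolynomial.T_pow, ← map_pow,
        LaurentPolynomial.single_eq_C_mul_T, map_mul]
      rw [LaurentPolynomial.T_sub]
      ring_nf
    rw [h1, AddMonoidAlgebra.coeff_sum, Finsupp.finset_sum_apply]
    refine Finset.sum_congr rfl fun m _ => ?_
    rw [AddMonoidAlgebra.coeff_single, Finsupp.single_apply]
  set A : Ideal R := p ⊔ Ideal.span {a} with hA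
  have hkey : ∀ c : R, π c ∈ Ideal.span {π a} → c ∈ A := by
    intro c hc
    obtain ⟨x, hx⟩ := Ideal.mem_span_singleton.mp hc
    obtain ⟨r, rfl⟩ := Ideal.Quotient.mk_surjective x
    have hmem : c - a * r ∈ p := by
      have h9 : π (c - a * r) = 0 := by
        rw [map_sub, map_mul, ← hx]; ring
      rwa [hπdef, Ideal.Quotient.eq_zero_iff_mem] at h9
    have h8 : c = (c - a * r) + a * r := by ring
    rw [h8]
    exact Ideal.add_mem _ (Ideal.mem_sup_left hmem)
      (Ideal.mem_sup_right (Ideal.mem_span_singleton.mpr ⟨r, rfl⟩))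
  have claim1 : ∀ g ∈ RingHom.ker φ, ∀ k : ℕ, coeff (Finsupp.single 0 k) g ∈ A := by
    intro g hg k
    have h0 := hcoeff g k
    rw [RingHom.mem_ker.mp hg] at h0
    rw [show ((0 : LaurentPolynomial (R ⧸ p)).coeff (k : ℤ)) = 0 from rfl] at h0
    set μ : Fin 2 →₀ ℕ := Finsupp.single 0 k with hμ
    by_cases hμs : μ ∈ g.support
    · rw [← Finset.add_sum_erase _ _ hμs] at h0
      have hterm : (if ((μ 0 : ℤ) - μ 1 = (k:ℤ)) then π (coeff μ g) * (π a) ^ (μ 1) else 0)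
          = π (coeff μ g) := by
        simp [hμ, Finsupp.single_apply]
      rw [hterm] at h0
      have hmem : π (coeff μ g) ∈ Ideal.span {π a} := by
        rw [eq_neg_of_add_eq_zero_left h0.symm]
        refine neg_mem (Ideal.sum_mem _ fun m hm => ?_)
        split_ifs with hcond
        · have hm1 : m 1 ≠ 0 := by
            intro h10
            apply (Finset.mem_erase.mp hm).1
            have h3 : (m 0 : ℤ) = (k : ℤ) := by rw [h10] at hcond; simpa using hcond
            have h4 : m 0 = k := Nat.cast_inj.mp h3
            ext i
            fin_cases i
            · simpa [hμ, Finsupp.single_apply] using h4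
            · simpa [hμ, Finsupp.single_apply] using h10
          obtain ⟨j, hj⟩ := Nat.exists_eq_succ_of_ne_zero hm1
          rw [hj, pow_succ, ← mul_assoc]
          exact Ideal.mul_mem_left _ _ (Ideal.mem_span_singleton_self _)
        · exact Ideal.zero_mem _
      exact hkey _ hmem
    · rw [MvPolynomial.notMem_support_iff.mp hμs]
      exact A.zero_mem
  have claim2 : ∀ g ∈ RingHom.ker φ, ∀ k : ℕ, coeff (Finsupp.single 1 k) g ∈ A := by
    intro g hg k
    have h0 := hcoeff g (-(k:ℤ))
    rw [RingHom.mem_ker.mp hg] at h0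
    rw [show ((0 : LaurentPolynomial (R ⧸ p)).coeff (-(k:ℤ))) = 0 from rfl] at h0
    have hfac : ∀ m ∈ g.support,
        (if ((m 0 : ℤ) - m 1 = -(k:ℤ)) then π (coeff m g) * (π a) ^ (m 1) else 0)
        = (if ((m 0 : ℤ) - m 1 = -(k:ℤ)) then π (coeff m g) * (π a) ^ (m 0) else 0) * (π a)^k := by
      intro m _
      split_ifs with hcond
      · have hm1 : m 1 = m 0 + k := by omega
        rw [hm1, pow_add, ← mul_assoc]
      · rw [zero_mul]
    rw [Finset.sum_congr rfl hfac, ← Finset.sum_mul] at h0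
    have hz : (∑ m ∈ g.support,
        if ((m 0 : ℤ) - m 1 = -(k:ℤ)) then π (coeff m g) * (π a) ^ (m 0) else 0) = 0 := by
      rcases mul_eq_zero.mp h0.symm with h | h
      · exact h
      · exact absurd h (pow_ne_zero _ hpa2)
    set μ : Fin 2 →₀ ℕ := Finsupp.single 1 k with hμ
    by_cases hμs : μ ∈ g.support
    · rw [← Finset.add_sum_erase _ _ hμs] at hz
      have hterm : (if ((μ 0 : ℤ) - μ 1 = -(k:ℤ)) then π (coeff μ g) * (π a) ^ (μ 0) else 0)
          = π (coeff μ g) := by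
        simp [hμ, Finsupp.single_apply]
      rw [hterm] at hz
      have hmem : π (coeff μ g) ∈ Ideal.span {π a} := by
        rw [eq_neg_of_add_eq_zero_left hz]
        refine neg_mem (Ideal.sum_mem _ fun m hm => ?_)
        split_ifs with hcond
        · have hm0 : m 0 ≠ 0 := by
            intro h10
            apply (Finset.mem_erase.mp hm).1
            have h4 : m 1 = k := by omega
            ext i
            fin_cases i
            · simpa [hμ, Finsupp.single_apply] using h10
            · simpa [hμ, Finsupp.single_apply] using h4
          obtain ⟨j, hj⟩ := Nat.exists_eq_succ_of_ne_zero hm0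
          rw [hj, pow_succ, ← mul_assoc]
          exact Ideal.mul_mem_left _ _ (Ideal.mem_span_singleton_self _)
        · exact Ideal.zero_mem _
      exact hkey _ hmem
    · rw [MvPolynomial.notMem_support_iff.mp hμs]
      exact A.zero_mem
  haveI hQp : (RingHom.ker φ).IsPrime := RingHom.ker_isPrime φ
  set F : MvPolynomial (Fin 2) R →+* MvPolynomial (Fin 2) S :=
    MvPolynomial.map (σ := Fin 2) f with hF
  have hQ := hf 2 (RingHom.ker φ) hQp
  set N : Ideal S := IsLocalRing.maximalIdeal S with hN
  have hpp : p.IsPrime := hp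
  have hpm : p ≤ IsLocalRing.maximalIdeal R := IsLocalRing.le_maximalIdeal hpp.ne_top
  have hfA : ∀ c ∈ A, f c ∈ N := by
    intro c hc
    obtain ⟨q, hq, s, hs, rfl⟩ := Submodule.mem_sup.mp hc
    obtain ⟨r, rfl⟩ := Ideal.mem_span_singleton.mp hs
    have hq' : f q ∈ N := by
      rw [hN, IsLocalRing.mem_maximalIdeal, mem_nonunits_iff]
      intro hu
      exact (IsLocalRing.mem_maximalIdeal q).mp (hpm hq) (IsLocalHom.map_nonunit q hu)
    rw [map_add, map_mul, ha, zero_mul, add_zero]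
    exact hq'
  haveI hNmax : N.IsMaximal := IsLocalRing.maximalIdeal.isMaximal S
  haveI : Nontrivial (S ⧸ N) := Ideal.Quotient.nontrivial_iff.mpr hNmax.ne_top
  set θ₁ : MvPolynomial (Fin 2) S →+* MvPolynomial (Fin 2) (S ⧸ N) :=
    MvPolynomial.eval₂Hom (MvPolynomial.C.comp (Ideal.Quotient.mk N))
      ![MvPolynomial.X 0, 0] with hθ₁
  set θ₂ : MvPolynomial (Fin 2) S →+* MvPolynomial (Fin 2) (S ⧸ N) :=
    MvPolynomial.eval₂Hom (MvPolynomial.C.comp (Ideal.Quotient.mk N))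
      ![0, MvPolynomial.X 1] with hθ₂
  have hvan1 : ∀ g ∈ RingHom.ker φ, θ₁ (F g) = 0 := by
    intro g hg
    rw [hθ₁, hF, coe_eval₂Hom, eval₂_map, eval₂_eq']
    refine Finset.sum_eq_zero fun m _ => ?_
    rw [Fin.prod_univ_two]
    simp only [Matrix.cons_val_zero, Matrix.cons_val_one, Matrix.head_cons]
    by_cases hm1 : m 1 = 0
    · rw [hm1, pow_zero, mul_one]
      have hmeq : m = Finsupp.single 0 (m 0) := by
        ext i
        fin_cases i
        · simp [Finsupp.single_apply]
        · simpa [Finsupp.single_apply] using hm1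
      have hcA : coeff m g ∈ A := by rw [hmeq]; exact claim1 g hg (m 0)
      have hzero : (Ideal.Quotient.mk N) (f (coeff m g)) = 0 :=
        Ideal.Quotient.eq_zero_iff_mem.mpr (hfA _ hcA)
      simp only [RingHom.coe_comp, Function.comp_apply, hzero, map_zero, zero_mul]
    · rw [zero_pow hm1, mul_zero, mul_zero]
  have hvan2 : ∀ g ∈ RingHom.ker φ, θ₂ (F g) = 0 := by
    intro g hg
    rw [hθ₂, hF, coe_eval₂Hom, eval₂_map, eval₂_eq']
    refine Finset.sum_eq_zero fun m _ => ?_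
    rw [Fin.prod_univ_two]
    simp only [Matrix.cons_val_zero, Matrix.cons_val_one, Matrix.head_cons]
    by_cases hm0 : m 0 = 0
    · rw [hm0, pow_zero, one_mul]
      have hmeq : m = Finsupp.single 1 (m 1) := by
        ext i
        fin_cases i
        · simpa [Finsupp.single_apply] using hm0
        · simp [Finsupp.single_apply]
      have hcA : coeff m g ∈ A := by rw [hmeq]; exact claim2 g hg (m 1)
      have hzero : (Ideal.Quotient.mk N) (f (coeff m g)) = 0 :=
        Ideal.Quotient.eq_zero_iff_mem.mpr (hfA _ hcA)
      simp only [RingHom.coe_comp, Function.comp_apply, hzero, map_zero, zero_mul]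
    · rw [zero_pow hm0, zero_mul, mul_zero]
  have hle1 : Ideal.map F (RingHom.ker φ) ≤ RingHom.ker θ₁ :=
    Ideal.map_le_iff_le_comap.mpr fun g hg => by
      rw [Ideal.mem_comap, RingHom.mem_ker]; exact hvan1 g hg
  have hle2 : Ideal.map F (RingHom.ker φ) ≤ RingHom.ker θ₂ :=
    Ideal.map_le_iff_le_comap.mpr fun g hg => by
      rw [Ideal.mem_comap, RingHom.mem_ker]; exact hvan2 g hg
  have hX0 : MvPolynomial.X 0 ∉ Ideal.map F (RingHom.ker φ) := by
    intro hmem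
    have h5 := hle1 hmem
    rw [RingHom.mem_ker, hθ₁, eval₂Hom_X'] at h5
    simp only [Matrix.cons_val_zero] at h5
    exact MvPolynomial.X_ne_zero _ h5
  have hX1 : MvPolynomial.X 1 ∉ Ideal.map F (RingHom.ker φ) := by
    intro hmem
    have h5 := hle2 hmem
    rw [RingHom.mem_ker, hθ₂, eval₂Hom_X'] at h5
    simp only [Matrix.cons_val_one, Matrix.head_cons] at h5
    exact MvPolynomial.X_ne_zero _ h5
  have hXY : (MvPolynomial.X 0 * MvPolynomial.X 1 : MvPolynomial (Fin 2) S)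
      ∈ Ideal.map F (RingHom.ker φ) := by
    have hker : (MvPolynomial.X 0 * MvPolynomial.X 1 - MvPolynomial.C a :
        MvPolynomial (Fin 2) R) ∈ RingHom.ker φ := by
      rw [RingHom.mem_ker, map_sub, map_mul, hφdef]
      simp only [eval₂Hom_X', eval₂Hom_C, RingHom.coe_comp, Function.comp_apply]
      rw [hv]
      simp only [Matrix.cons_val_zero, Matrix.cons_val_one, Matrix.head_cons]
      rw [mul_left_comm, ← LaurentPolynomial.T_add]
      norm_num
    have h6 := Ideal.mem_map_of_mem F hker
    rwa [map_sub, map_mul, hF, MvPolynomial.map_X, MvPolynomial.map_X, MvPolynomial.map_C,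
      ha, MvPolynomial.C_0, sub_zero] at h6
  rcases hQ with hprime | htop
  · rcases hprime.mem_or_mem hXY with h | h
    · exact hX0 h
    · exact hX1 h
  · exact hX0 (htop ▸ Submodule.mem_top)

theorem ker_le_nilradical_of_stable_pep {R S : Type*} [CommRing R] [CommRing S]
    [IsLocalRing R] [IsLocalRing S] (f : R →+* S) [IsLocalHom f]
    (hf : StablePrimeExtensionProperty f) :
    (RingHom.ker f ≤ nilradical R) ∧ (IsReduced R → Function.Injective f) := by
  have h := aux_ker_le_nilradical f hf
  refine ⟨h, fun hred => ?_⟩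
  rw [RingHom.injective_iff_ker_eq_bot]
  exact le_bot_iff.mp (le_of_le_of_eq h (nilradical_eq_zero R))
end

section
/- Let R → S have the stable prime extension property. Then for every prime ideal P of R, either PS = S or the contraction of PS to R equals P. -/
namespace StablePepAux

open LaurentPolynomial

/-- `n ↦ T n` as a monoid hom from `Multiplicative ℤ` to Laurent polynomials. -/
noncomputable def TMonHom (B : Type*) [CommSemiring B] :
    Multiplicative ℤ →* LaurentPolynomial B where
  toFun n := T n.toAdd
  map_one' := by
    show T (Multiplicative.toAdd 1) = 1
    rw [toAdd_one, T_zero]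
  map_mul' x y := by
    show T (Multiplicative.toAdd (x * y)) = T x.toAdd * T y.toAdd
    rw [toAdd_mul, T_add]

/-- Functoriality of Laurent polynomials in the coefficients. -/
noncomputable def LMap {A B : Type*} [CommSemiring A] [CommSemiring B] (c : A →+* B) :
    LaurentPolynomial A →+* LaurentPolynomial B :=
  AddMonoidAlgebra.liftNCRingHom (LaurentPolynomial.C.comp c) (TMonHom B)
    fun _ _ => Commute.all _ _

lemma LMap_single {A B : Type*} [CommSemiring A] [CommSemiring B] (c : A →+* B)
    (n : ℤ) (x : A) :
    LMap c (AddMonoidAlgebra.single n x) = AddMonoidAlgebra.single n (c x) := by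
  show AddMonoidAlgebra.liftNC _ _ _ = _
  rw [AddMonoidAlgebra.liftNC_single]
  show LaurentPolynomial.C (c x) * T n = _
  rw [single_eq_C_mul_T]

lemma LMap_C {A B : Type*} [CommSemiring A] [CommSemiring B] (c : A →+* B) (x : A) :
    LMap c (C x) = C (c x) := by
  rw [← single_eq_C, ← single_eq_C, LMap_single]

lemma LMap_T {A B : Type*} [CommSemiring A] [CommSemiring B] (c : A →+* B) (n : ℤ) :
    LMap c (T n) = T n := by
  show LMap c (AddMonoidAlgebra.single n 1) = _
  rw [LMap_single, map_one]; rfl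

lemma LMap_apply {A B : Type*} [CommSemiring A] [CommSemiring B] (c : A →+* B)
    (g : LaurentPolynomial A) :
    LMap c g = AddMonoidAlgebra.ofCoeff (Finsupp.mapRange c c.map_zero g.coeff) := by
  induction g using AddMonoidAlgebra.induction_linear with
  | zero => simp
  | add p q hp hq => rw [map_add, hp, hq, AddMonoidAlgebra.coeff_add,
      Finsupp.mapRange_add c.map_add, AddMonoidAlgebra.ofCoeff_add]
  | single n x => rw [LMap_single, AddMonoidAlgebra.coeff_single, Finsupp.mapRange_single]; rfl

lemma LMap_injective {A B : Type*} [CommSemiring A] [CommSemiring B] {c : A →+* B}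
    (hc : Function.Injective c) : Function.Injective (LMap c) := by
  intro x y h
  rw [LMap_apply, LMap_apply] at h
  exact AddMonoidAlgebra.coeff_injective
    (Finsupp.mapRange_injective c c.map_zero hc (AddMonoidAlgebra.ofCoeff_injective h))

open MvPolynomial in
/-- The map `A[X,Y] → B[T,T⁻¹]`, `X ↦ T`, `Y ↦ b·T⁻¹`, coefficients via `c`. -/
noncomputable def lphi {A B : Type*} [CommRing A] [CommRing B] (c : A →+* B) (b : B) :
    MvPolynomial (Fin 2) A →+* LaurentPolynomial B :=
  eval₂Hom (LaurentPolynomial.C.comp c) ![T 1, LaurentPolynomial.C b * T (-1)]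

open MvPolynomial in
/-- The map `A[X,Y] → B[T,T⁻¹]`, `X ↦ b·T⁻¹`, `Y ↦ T`, coefficients via `c`. -/
noncomputable def lphi' {A B : Type*} [CommRing A] [CommRing B] (c : A →+* B) (b : B) :
    MvPolynomial (Fin 2) A →+* LaurentPolynomial B :=
  eval₂Hom (LaurentPolynomial.C.comp c) ![LaurentPolynomial.C b * T (-1), T 1]

variable {A A₂ B B₂ : Type*} [CommRing A] [CommRing A₂] [CommRing B] [CommRing B₂]

@[simp] lemma lphi_C (c : A →+* B) (b : B) (r : A) :
    lphi c b (MvPolynomial.C r) = C (c r) := by simp [lphi]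

@[simp] lemma lphi_X0 (c : A →+* B) (b : B) :
    lphi c b (MvPolynomial.X 0) = T 1 := by simp [lphi]

@[simp] lemma lphi_X1 (c : A →+* B) (b : B) :
    lphi c b (MvPolynomial.X 1) = C b * T (-1) := by simp [lphi]

@[simp] lemma lphi'_C (c : A →+* B) (b : B) (r : A) :
    lphi' c b (MvPolynomial.C r) = C (c r) := by simp [lphi']

@[simp] lemma lphi'_X0 (c : A →+* B) (b : B) :
    lphi' c b (MvPolynomial.X 0) = C b * T (-1) := by simp [lphi']

@[simp] lemma lphi'_X1 (c : A →+* B) (b : B) :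
    lphi' c b (MvPolynomial.X 1) = T 1 := by simp [lphi']

lemma LMap_comp_lphi (c : A →+* B) (c' : B →+* B₂) (b : B) :
    (LMap c').comp (lphi c b) = lphi (c'.comp c) (c' b) := by
  apply MvPolynomial.ringHom_ext
  · intro r
    simp [LMap_C]
  · intro i
    fin_cases i <;> simp [LMap_C, LMap_T]

lemma LMap_comp_lphi' (c : A →+* B) (c' : B →+* B₂) (b : B) :
    (LMap c').comp (lphi' c b) = lphi' (c'.comp c) (c' b) := by
  apply MvPolynomial.ringHom_ext
  · intro r
    simp [LMap_C]
  · intro i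
    fin_cases i <;> simp [LMap_C, LMap_T]

lemma lphi_comp_map (f : A →+* A₂) (c : A₂ →+* B) (b : B) :
    (lphi c b).comp (MvPolynomial.map f) = lphi (c.comp f) b := by
  apply MvPolynomial.ringHom_ext
  · intro r
    simp
  · intro i
    fin_cases i <;> simp

lemma lphi'_comp_map (f : A →+* A₂) (c : A₂ →+* B) (b : B) :
    (lphi' c b).comp (MvPolynomial.map f) = lphi' (c.comp f) b := by
  apply MvPolynomial.ringHom_ext
  · intro r
    simp
  · intro i
    fin_cases i <;> simp

variable {F : Type*} [Field F]

/-- The unit `b·T⁻¹` of the ring of Laurent polynomials over a field. -/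
noncomputable def lunit (b : F) (hb : b ≠ 0) : (LaurentPolynomial F)ˣ where
  val := C b * T (-1)
  inv := C b⁻¹ * T 1
  val_inv := by
    rw [mul_mul_mul_comm, ← map_mul, mul_inv_cancel₀ hb, map_one, one_mul, ← T_add]
    norm_num
  inv_val := by
    rw [mul_mul_mul_comm, ← map_mul, inv_mul_cancel₀ hb, map_one, one_mul, ← T_add]
    norm_num

/-- The endomorphism of Laurent polynomials over a field sending `T ↦ b·T⁻¹`. -/
noncomputable def ltau (b : F) (hb : b ≠ 0) :
    LaurentPolynomial F →+* LaurentPolynomial F :=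
  AddMonoidAlgebra.liftNCRingHom LaurentPolynomial.C
    ((Units.coeHom _).comp (zpowersHom _ (lunit b hb))) fun _ _ => Commute.all _ _

lemma ltau_single (b : F) (hb : b ≠ 0) (n : ℤ) (x : F) :
    ltau b hb (AddMonoidAlgebra.single n x) = C x * ↑(lunit b hb ^ n) := by
  show AddMonoidAlgebra.liftNC _ _ _ = _
  rw [AddMonoidAlgebra.liftNC_single]
  rfl

lemma ltau_C (b : F) (hb : b ≠ 0) (x : F) : ltau b hb (C x) = C x := by
  rw [← single_eq_C, ltau_single, zpow_zero, Units.val_one, mul_one]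
  exact (single_eq_C x).symm

lemma ltau_T1 (b : F) (hb : b ≠ 0) : ltau b hb (T 1) = C b * T (-1) := by
  show ltau b hb (AddMonoidAlgebra.single 1 1) = _
  rw [ltau_single, zpow_one, map_one, one_mul]
  rfl

lemma ltau_Tm1 (b : F) (hb : b ≠ 0) : ltau b hb (T (-1)) = C b⁻¹ * T 1 := by
  show ltau b hb (AddMonoidAlgebra.single (-1) 1) = _
  rw [ltau_single, zpow_neg_one, map_one, one_mul]
  rfl

lemma ltau_comp_lphi (c : A →+* F) (b : F) (hb : b ≠ 0) :
    (ltau b hb).comp (lphi c b) = lphi' c b := by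
  apply MvPolynomial.ringHom_ext
  · intro r
    simp [ltau_C]
  · intro i
    fin_cases i
    · simp [ltau_T1]
    · simp only [RingHom.comp_apply]
      rw [show ((⟨1, by omega⟩ : Fin 2) : Fin 2) = (1 : Fin 2) from rfl, lphi_X1, map_mul,
        ltau_C, ltau_Tm1, lphi'_X1, ← mul_assoc, ← map_mul, mul_inv_cancel₀ hb, map_one, one_mul]

end StablePepAux

open StablePepAux LaurentPolynomial in
theorem comap_map_eq_of_stable_pep {R S : Type*} [CommRing R] [CommRing S]
    (f : R →+* S) (hf : StablePrimeExtensionProperty f)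
    (P : Ideal R) (hP : P.IsPrime) :
    P.map f = ⊤ ∨ (P.map f).comap f = P := by
  classical
  by_cases htop : P.map f = ⊤
  · exact Or.inl htop
  refine Or.inr (le_antisymm ?_ Ideal.le_comap_map)
  by_contra hcon
  obtain ⟨a, ha, haP⟩ := SetLike.not_le_iff_exists.mp hcon
  haveI := hP
  haveI : Nontrivial (S ⧸ P.map f) := Ideal.Quotient.nontrivial_iff.mpr htop
  set mk : R →+* R ⧸ P := Ideal.Quotient.mk P with hmk
  set k : (R ⧸ P) →+* FractionRing (R ⧸ P) := algebraMap _ _ with hkdef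
  have hk : Function.Injective k := IsFractionRing.injective (R ⧸ P) (FractionRing (R ⧸ P))
  have hab : k (mk a) ≠ 0 := by
    intro h
    exact haP (Ideal.Quotient.eq_zero_iff_mem.mp (hk (by simpa using h)))
  haveI : IsDomain (LaurentPolynomial (FractionRing (R ⧸ P))) := NoZeroDivisors.to_isDomain _
  -- the key prime ideal of `R[X,Y]`: the kernel of `X ↦ T`, `Y ↦ ā·T⁻¹`
  set Q : Ideal (MvPolynomial (Fin 2) R) := RingHom.ker (lphi (k.comp mk) (k (mk a))) with hQdef
  have hQ : Q.IsPrime := RingHom.ker_isPrime _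
  set ext : Ideal (MvPolynomial (Fin 2) S) := Q.map (MvPolynomial.map f) with hext
  -- the two detecting maps on the `S` side
  set mkS : S →+* S ⧸ P.map f := Ideal.Quotient.mk (P.map f) with hmkS
  set q : (R ⧸ P) →+* S ⧸ P.map f := Ideal.quotientMap (P.map f) f Ideal.le_comap_map with hq
  have hqmk : q.comp mk = mkS.comp f := by
    ext r
    simp [hq, hmk, hmkS, Ideal.quotientMap_mk]
  have hmkfa : mkS (f a) = 0 := Ideal.Quotient.eq_zero_iff_mem.mpr ha
  -- elements of `Q` are killed by `lphi mk (mk a)` and `lphi' mk (mk a)`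
  have memQ_phi : ∀ g ∈ Q, lphi mk (mk a) g = 0 := by
    intro g hg
    apply LMap_injective hk
    rw [map_zero, ← RingHom.comp_apply, LMap_comp_lphi]
    exact hg
  have memQ_phi' : ∀ g ∈ Q, lphi' mk (mk a) g = 0 := by
    intro g hg
    apply LMap_injective hk
    rw [map_zero, ← RingHom.comp_apply, LMap_comp_lphi', ← ltau_comp_lphi (k.comp mk) _ hab,
      RingHom.comp_apply, RingHom.mem_ker.mp hg, map_zero]
  -- hence the extension of `Q` is killed by the two detecting maps
  have extLe : ext ≤ RingHom.ker (lphi mkS (0 : S ⧸ P.map f)) := by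
    rw [hext, Ideal.map_le_iff_le_comap]
    intro g hg
    have : lphi mkS (0 : S ⧸ P.map f) (MvPolynomial.map f g) = 0 := by
      rw [← RingHom.comp_apply, lphi_comp_map, ← hqmk,
        show (0 : S ⧸ P.map f) = q (mk a) by rw [← hmkfa, ← RingHom.comp_apply, ← hqmk]; rfl,
        ← LMap_comp_lphi, RingHom.comp_apply, memQ_phi g hg, map_zero]
    exact Ideal.mem_comap.mpr (RingHom.mem_ker.mpr this)
  have extLe' : ext ≤ RingHom.ker (lphi' mkS (0 : S ⧸ P.map f)) := by
    rw [hext, Ideal.map_le_iff_le_comap]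
    intro g hg
    have : lphi' mkS (0 : S ⧸ P.map f) (MvPolynomial.map f g) = 0 := by
      rw [← RingHom.comp_apply, lphi'_comp_map, ← hqmk,
        show (0 : S ⧸ P.map f) = q (mk a) by rw [← hmkfa, ← RingHom.comp_apply, ← hqmk]; rfl,
        ← LMap_comp_lphi', RingHom.comp_apply, memQ_phi' g hg, map_zero]
    exact Ideal.mem_comap.mpr (RingHom.mem_ker.mpr this)
  -- membership facts for the extension
  have hCa : MvPolynomial.C (f a) ∈ ext := by
    have h1 : P.map f ≤ Ideal.comap (MvPolynomial.C (σ := Fin 2)) ext := by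
      rw [Ideal.map_le_iff_le_comap]
      intro p hp
      have hmem : (MvPolynomial.C p : MvPolynomial (Fin 2) R) ∈ Q := by
        rw [hQdef, RingHom.mem_ker, lphi_C, RingHom.comp_apply,
          Ideal.Quotient.eq_zero_iff_mem.mpr hp, map_zero, map_zero]
      have h2 := Ideal.mem_map_of_mem (MvPolynomial.map f) hmem
      rw [MvPolynomial.map_C] at h2
      exact Ideal.mem_comap.mpr (Ideal.mem_comap.mpr h2)
    exact h1 ha
  have hXY : MvPolynomial.X 0 * MvPolynomial.X 1 ∈ ext := by
    have hmem : (MvPolynomial.X 0 * MvPolynomial.X 1 - MvPolynomial.C a :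
        MvPolynomial (Fin 2) R) ∈ Q := by
      rw [hQdef, RingHom.mem_ker, map_sub, map_mul, lphi_X0, lphi_X1, lphi_C, mul_left_comm,
        ← T_add]
      norm_num
    have h2 := Ideal.mem_map_of_mem (MvPolynomial.map f) hmem
    rw [map_sub, map_mul, MvPolynomial.map_X, MvPolynomial.map_X, MvPolynomial.map_C] at h2
    have h3 := Ideal.add_mem ext h2 hCa
    rwa [sub_add_cancel] at h3
  -- `T 1 ≠ 0` over the nontrivial ring `S ⧸ P.map f`
  have hT1 : (T 1 : LaurentPolynomial (S ⧸ P.map f)) ≠ 0 := by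
    intro h
    exact zero_ne_one (isUnit_zero_iff.mp (h ▸ isUnit_T (R := S ⧸ P.map f) 1))
  -- the contradiction
  rcases hf 2 Q hQ with hprime | htop'
  · rcases hprime.mem_or_mem hXY with hX | hY
    · have h := RingHom.mem_ker.mp (extLe hX)
      rw [lphi_X0] at h
      exact hT1 h
    · have h := RingHom.mem_ker.mp (extLe' hY)
      rw [lphi'_X1] at h
      exact hT1 h
  · have h1 : (1 : MvPolynomial (Fin 2) S) ∈ ext := by
      rw [hext, htop']; exact Submodule.mem_top
    have h := RingHom.mem_ker.mp (extLe h1)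
    rw [map_one] at h
    exact one_ne_zero h
end

section
/- If a ring homomorphism R → S has the stable prime extension property, then for every prime ideal P of R and every field extension L of the residue field κ(P) = Frac(R/P), the ring L ⊗_R S is an integral domain or zero. Conversely, if R → S is flat and for every prime P of R the fiber κ(P) ⊗_R S is geometrically reduced and irreducible over κ(P), then R → S has the stable prime extension property. -/
open TensorProduct

/-- The residue field `κ(P) = R_P / P R_P` of a prime `P`. -/
abbrev ResidueFieldAt {R : Type u} [CommRing R] (P : Ideal R) [P.IsPrime] : Type u :=
  IsLocalRing.ResidueField (Localization.AtPrime P)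

set_option maxHeartbeats 1000000
set_option synthInstance.maxHeartbeats 400000

section LemmaB
variable {R S : Type*} [CommRing R] [CommRing S] [Algebra R S]
variable {σ : Type*} (Q : Ideal (MvPolynomial σ R))

noncomputable def fwdHom : MvPolynomial σ S →+* (MvPolynomial σ R ⧸ Q) ⊗[R] S :=
  MvPolynomial.eval₂Hom ((Algebra.TensorProduct.includeRight (R := R) (A := MvPolynomial σ R ⧸ Q) (B := S)).toRingHom)
    (fun i => (Ideal.Quotient.mk Q (MvPolynomial.X i)) ⊗ₜ[R] (1 : S))

lemma fwdHom_map (p : MvPolynomial σ R) :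
    fwdHom Q (MvPolynomial.map (algebraMap R S) p) = (Ideal.Quotient.mk Q p) ⊗ₜ 1 := by
  induction p using MvPolynomial.induction_on with
  | C r =>
      simp only [MvPolynomial.map_C, fwdHom, MvPolynomial.eval₂Hom_C]
      have h1 : (Ideal.Quotient.mk Q) (MvPolynomial.C r) = algebraMap R _ r := rfl
      rw [h1, ← Algebra.TensorProduct.algebraMap_apply, Algebra.TensorProduct.algebraMap_apply']
      rfl
  | add p q hp hq => simp [map_add, hp, hq, TensorProduct.add_tmul]
  | mul_X p i hp =>
      simp only [map_mul, MvPolynomial.map_X, hp]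
      have : fwdHom Q (MvPolynomial.X (R := S) i) = (Ideal.Quotient.mk Q (MvPolynomial.X i)) ⊗ₜ 1 := by
        simp [fwdHom]
      rw [this, Algebra.TensorProduct.tmul_mul_tmul, mul_one]

lemma extIdeal_vanish : ∀ a ∈ Q.map (MvPolynomial.map (algebraMap R S)), fwdHom Q a = 0 := by
  intro a ha
  have h : a ∈ Ideal.comap (fwdHom Q) ⊥ := by
    refine Ideal.map_le_iff_le_comap.2 ?_ ha
    intro q hq
    simp only [Ideal.mem_comap, Ideal.mem_bot, fwdHom_map]
    rw [Ideal.Quotient.eq_zero_iff_mem.2 hq, TensorProduct.zero_tmul]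
  simpa using h

noncomputable def fwdBar :
    (MvPolynomial σ S ⧸ Q.map (MvPolynomial.map (algebraMap R S))) →+*
      (MvPolynomial σ R ⧸ Q) ⊗[R] S :=
  Ideal.Quotient.lift (S := (MvPolynomial σ R ⧸ Q) ⊗[R] S) _ (fwdHom Q) (extIdeal_vanish Q)

noncomputable def bwdAlg :
    ((MvPolynomial σ R ⧸ Q) ⊗[R] S) →ₐ[R]
      (MvPolynomial σ S ⧸ Q.map (MvPolynomial.map (algebraMap R S))) :=
  Algebra.TensorProduct.lift
    (Ideal.quotientMapₐ _ (MvPolynomial.mapAlgHom (Algebra.ofId R S)) (by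
      rw [← Ideal.map_le_iff_le_comap]
      have : (MvPolynomial.mapAlgHom (R := R) (σ := σ) (Algebra.ofId R S)).toRingHom
          = MvPolynomial.map (algebraMap R S) := rfl
      exact le_of_eq rfl))
    ((Ideal.Quotient.mkₐ R _).comp (IsScalarTower.toAlgHom R S (MvPolynomial σ S)))
    (fun _ _ => Commute.all _ _)

lemma bwd_fwd (b : MvPolynomial σ S) :
    bwdAlg Q (fwdHom Q b) = Ideal.Quotient.mk _ b := by
  have : (bwdAlg Q).toRingHom.comp (fwdHom Q)
      = Ideal.Quotient.mk (Q.map (MvPolynomial.map (algebraMap R S))) := by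
    apply MvPolynomial.ringHom_ext
    · intro s
      simp [fwdHom, bwdAlg]
    · intro i
      simp [fwdHom, bwdAlg]
  exact RingHom.congr_fun this b

lemma fwd_bwd (x : (MvPolynomial σ R ⧸ Q) ⊗[R] S) :
    fwdBar Q (bwdAlg Q x) = x := by
  induction x with
  | zero => simp
  | add a b ha hb => simp [map_add, ha, hb]
  | tmul a s =>
      obtain ⟨p, rfl⟩ := Ideal.Quotient.mk_surjective a
      have h1 : bwdAlg Q ((Ideal.Quotient.mk Q p) ⊗ₜ[R] s)
          = Ideal.Quotient.mk _ ((MvPolynomial.map (algebraMap R S) p) * MvPolynomial.C s) := by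
        simp [bwdAlg, Algebra.TensorProduct.lift_tmul]
      rw [h1]
      show fwdHom Q _ = _
      rw [map_mul, fwdHom_map]
      have : fwdHom Q (MvPolynomial.C s) = 1 ⊗ₜ s := by simp [fwdHom]
      rw [this, Algebra.TensorProduct.tmul_mul_tmul, mul_one, one_mul]

/-- The fiber presentation: `S[X]/Q^e ≃ (R[X]/Q) ⊗ S`. -/
noncomputable def lemmaB :
    (MvPolynomial σ S ⧸ Q.map (MvPolynomial.map (algebraMap R S))) ≃+*
      (MvPolynomial σ R ⧸ Q) ⊗[R] S where
  toFun := fwdBar Q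
  invFun := bwdAlg Q
  left_inv := fun x => by
    obtain ⟨b, rfl⟩ := Ideal.Quotient.mk_surjective x
    have h1 : fwdBar Q (Ideal.Quotient.mk _ b) = fwdHom Q b := Ideal.Quotient.lift_mk _ _ _
    rw [h1, bwd_fwd]
  right_inv := fwd_bwd Q
  map_mul' := map_mul _
  map_add' := map_add _

end LemmaB

section LemmaC
variable {R S : Type*} [CommRing R] [CommRing S] [Algebra R S] {σ : Type*}

open MvPolynomial

lemma exists_rename_of_vars_subset {K : Type*} [CommRing K] (J : Finset σ)
    (p : MvPolynomial σ K) (hp : ↑p.vars ⊆ (J : Set σ)) :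
    ∃ q : MvPolynomial (Fin J.card) K,
      rename (fun k => ((J.equivFin.symm k : J) : σ)) q = p := by
  have h1 : p ∈ supported K (J : Set σ) := mem_supported.2 hp
  rw [supported_eq_range_rename] at h1
  obtain ⟨q', hq'⟩ := h1
  refine ⟨rename J.equivFin q', ?_⟩
  have hfe : (fun k => ((J.equivFin.symm k : J) : σ)) ∘ ⇑J.equivFin
      = fun (x : {x // x ∈ (J : Set σ)}) => (x : σ) := by
    funext x; simp
  rw [← hq', rename_rename, hfe]
  rfl

/-- Extensions of primes in infinitely many variables reduce to finitely many variables. -/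
lemma lemmaC (hpep : StablePrimeExtensionProperty (algebraMap R S))
    (Q : Ideal (MvPolynomial σ R)) (hQ : Q.IsPrime) :
    (Q.map (MvPolynomial.map (algebraMap R S))).IsPrime ∨
      Q.map (MvPolynomial.map (algebraMap R S)) = ⊤ := by
  by_cases htop : Q.map (MvPolynomial.map (algebraMap R S)) = ⊤
  · exact Or.inr htop
  left
  constructor
  · exact htop
  intro p q hpq
  have hmem : p * q ∈ Submodule.span (MvPolynomial σ S)
      ((MvPolynomial.map (algebraMap R S)) '' ↑Q) := hpq
  rw [Submodule.mem_span_set'] at hmem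
  obtain ⟨n, f, g, hsum⟩ := hmem
  choose gq hgqQ hgq using (fun i => (g i).2)
  classical
  let J : Finset σ := p.vars ∪ q.vars ∪
    (Finset.univ.sup (fun i : Fin n => (f i).vars ∪ (gq i).vars))
  set ι : Fin J.card → σ := fun k => ((J.equivFin.symm k : J) : σ) with hι
  have hinj : Function.Injective ι := by
    intro a b hab
    apply J.equivFin.symm.injective
    exact Subtype.ext hab
  have hρinjS : Function.Injective (rename (R := S) ι) := rename_injective ι hinj
  obtain ⟨p₁, hp₁⟩ := exists_rename_of_vars_subset J p
    (by intro x hx; simp only [J, Finset.coe_union, Set.mem_union]; left; left; exact hx)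
  obtain ⟨q₁, hq₁⟩ := exists_rename_of_vars_subset J q
    (by intro x hx; simp only [J, Finset.coe_union, Set.mem_union]; left; right; exact hx)
  have hJsup : ∀ (i : Fin n) (x : σ), x ∈ (f i).vars ∪ (gq i).vars → x ∈ (J : Set σ) := by
    intro i x hx
    simp only [J, Finset.coe_union, Set.mem_union]
    right
    exact Finset.mem_coe.2
      ((Finset.le_sup (f := fun i : Fin n => (f i).vars ∪ (gq i).vars) (Finset.mem_univ i)) hx)
  choose f₁ hf₁ using fun i => exists_rename_of_vars_subset J (f i)
    (fun x hx => hJsup i x (Finset.mem_union_left _ hx))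
  choose g₁ hg₁ using fun i => exists_rename_of_vars_subset J (gq i)
    (fun x hx => hJsup i x (Finset.mem_union_right _ hx))
  let ρR : MvPolynomial (Fin J.card) R →+* MvPolynomial σ R := (rename ι).toRingHom
  let ρS : MvPolynomial (Fin J.card) S →+* MvPolynomial σ S := (rename ι).toRingHom
  let Qm : Ideal (MvPolynomial (Fin J.card) R) := Q.comap ρR
  haveI := hQ
  have hQm : Qm.IsPrime := Ideal.comap_isPrime ρR Q
  have hcomm : ρS.comp (MvPolynomial.map (algebraMap R S))
      = (MvPolynomial.map (algebraMap R S)).comp ρR :=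
    RingHom.ext fun x => (map_rename _ _ _).symm
  have key : (Qm.map (MvPolynomial.map (algebraMap R S))).map ρS
      ≤ Q.map (MvPolynomial.map (algebraMap R S)) := by
    rw [Ideal.map_map, hcomm, ← Ideal.map_map]
    exact Ideal.map_mono Ideal.map_comap_le
  have hw : p₁ * q₁ ∈ Qm.map (MvPolynomial.map (algebraMap R S)) := by
    have hρ : rename ι (p₁ * q₁) = p * q := by rw [map_mul, hp₁, hq₁]
    have hρ2 : rename ι (∑ i, f₁ i * (MvPolynomial.map (algebraMap R S)) (g₁ i)) = p * q := by
      rw [map_sum, ← hsum]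
      apply Finset.sum_congr rfl
      intro i _
      rw [map_mul, hf₁ i, ← map_rename, hg₁ i, hgq i, smul_eq_mul]
    have heq := hρinjS (hρ.trans hρ2.symm)
    rw [heq]
    refine Ideal.sum_mem _ (fun i _ => Ideal.mul_mem_left _ _ (Ideal.mem_map_of_mem _ ?_))
    show rename ι (g₁ i) ∈ Q
    rw [hg₁ i]
    exact hgqQ i
  rcases hpep J.card Qm hQm with hPrime | hTop
  · rcases hPrime.mem_or_mem hw with h | h
    · exact Or.inl (by rw [← hp₁]; exact key (Ideal.mem_map_of_mem ρS h))
    · exact Or.inr (by rw [← hq₁]; exact key (Ideal.mem_map_of_mem ρS h))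
  · exfalso
    apply htop
    rw [Ideal.eq_top_iff_one]
    have h1 : (1 : MvPolynomial (Fin J.card) S)
        ∈ Qm.map (MvPolynomial.map (algebraMap R S)) := by rw [hTop]; trivial
    have h2 := key (Ideal.mem_map_of_mem ρS h1)
    simpa using h2

end LemmaC

theorem stable_pep_and_fibers {R S : Type u} [CommRing R] [CommRing S] [Algebra R S] :
    (StablePrimeExtensionProperty (algebraMap R S) →
      ∀ (P : Ideal R) (_ : P.IsPrime) (L : Type u) (_ : Field L)
        (_ : Algebra (ResidueFieldAt P) L) (_ : Algebra R L)
        (_ : IsScalarTower R (ResidueFieldAt P) L),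
        IsDomain (L ⊗[R] S) ∨ Subsingleton (L ⊗[R] S))
    ∧
    (Module.Flat R S →
      (∀ (P : Ideal R) (_ : P.IsPrime) (L : Type u) (_ : Field L)
        (_ : Algebra (ResidueFieldAt P) L) (_ : Algebra R L)
        (_ : IsScalarTower R (ResidueFieldAt P) L),
        IsDomain (L ⊗[R] S)) →
      StablePrimeExtensionProperty (algebraMap R S)) := by
  constructor
  · -- forward direction
    intro hpep P hP L _ _ _ _
    -- present L as a quotient of a polynomial ring on the set L
    let ε : MvPolynomial L R →ₐ[R] L := MvPolynomial.aeval id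
    have hsurj : Function.Surjective ε := fun l => ⟨MvPolynomial.X l, by simp [ε]⟩
    let Q : Ideal (MvPolynomial L R) := RingHom.ker (ε : MvPolynomial L R →+* L)
    have hQ : Q.IsPrime := RingHom.ker_isPrime _
    let e1 : (MvPolynomial L R ⧸ Q) ≃ₐ[R] L := Ideal.quotientKerAlgEquivOfSurjective hsurj
    let e2 : ((MvPolynomial L R ⧸ Q) ⊗[R] S) ≃+* (L ⊗[R] S) :=
      (Algebra.TensorProduct.congr e1 AlgEquiv.refl).toRingEquiv
    let E : (MvPolynomial L S ⧸ Q.map (MvPolynomial.map (algebraMap R S))) ≃+* (L ⊗[R] S) :=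
      (lemmaB Q).trans e2
    rcases lemmaC hpep Q hQ with hPrime | hTop
    · left
      haveI : IsDomain (MvPolynomial L S ⧸ Q.map (MvPolynomial.map (algebraMap R S))) :=
        (Ideal.Quotient.isDomain_iff_prime _).2 hPrime
      exact Function.Injective.isDomain E.symm.toRingHom E.symm.injective
    · right
      haveI : Subsingleton (MvPolynomial L S ⧸ Q.map (MvPolynomial.map (algebraMap R S))) :=
        Ideal.Quotient.subsingleton_iff.2 hTop
      exact E.surjective.subsingleton
  · -- converse direction
    intro hflat hfib n Q hQ
    haveI := hQ
    haveI hdom : IsDomain (MvPolynomial (Fin n) R ⧸ Q) :=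
      (Ideal.Quotient.isDomain_iff_prime Q).2 hQ
    set A := MvPolynomial (Fin n) R ⧸ Q with hA
    let K := FractionRing A
    let P : Ideal R := RingHom.ker (algebraMap R A)
    haveI hP : P.IsPrime := RingHom.ker_isPrime _
    -- build the residue field map κ(P) → K
    have hunit : ∀ y : P.primeCompl, IsUnit ((algebraMap R K) y) := by
      intro ⟨y, hy⟩
      rw [isUnit_iff_ne_zero]
      intro h0
      apply hy
      show y ∈ P
      have : algebraMap A K (algebraMap R A y) = 0 := h0
      have h1 : algebraMap R A y = 0 := by
        apply IsFractionRing.injective A K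
        simpa using this
      exact h1
    let h : Localization.AtPrime P →+* K := IsLocalization.lift hunit
    have hvanish : ∀ a ∈ IsLocalRing.maximalIdeal (Localization.AtPrime P), h a = 0 := by
      intro a ha
      rw [← Localization.AtPrime.map_eq_maximalIdeal] at ha
      have h2 : a ∈ Ideal.comap h ⊥ := by
        refine Ideal.map_le_iff_le_comap.2 ?_ ha
        intro r hr
        simp only [Ideal.mem_comap, Ideal.mem_bot]
        rw [show h ((algebraMap R (Localization.AtPrime P)) r) = algebraMap R K r from
          IsLocalization.lift_eq hunit r]
        show algebraMap A K (algebraMap R A r) = 0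
        rw [show algebraMap R A r = 0 from hr, map_zero]
      simpa using h2
    let resmap : ResidueFieldAt P →+* K := Ideal.Quotient.lift _ h hvanish
    letI : Algebra (ResidueFieldAt P) K := resmap.toAlgebra
    haveI htower := IsScalarTower.of_algebraMap_eq' (R := R) (S := ResidueFieldAt P) (A := K)
      (by
        ext r
        show algebraMap R K r = resmap (algebraMap R (ResidueFieldAt P) r)
        rw [show algebraMap R (ResidueFieldAt P) r
            = Ideal.Quotient.mk _ ((algebraMap R (Localization.AtPrime P)) r) from rfl]
        rw [show resmap (Ideal.Quotient.mk _ ((algebraMap R (Localization.AtPrime P)) r))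
            = h ((algebraMap R (Localization.AtPrime P)) r) from rfl]
        exact (IsLocalization.lift_eq hunit r).symm)
    haveI hKdom : IsDomain (K ⊗[R] S) := hfib P hP K inferInstance ‹_› inferInstance htower
    -- embed A ⊗ S into K ⊗ S
    let φ : (A ⊗[R] S) →ₐ[R] (K ⊗[R] S) :=
      Algebra.TensorProduct.map (IsScalarTower.toAlgHom R A K) (AlgHom.id R S)
    have hlin : Function.Injective (IsScalarTower.toAlgHom R A K).toLinearMap := by
      intro a b hab
      exact IsFractionRing.injective A K hab
    have hφeq : φ.toLinearMap
        = LinearMap.rTensor S (IsScalarTower.toAlgHom R A K).toLinearMap := by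
      apply TensorProduct.ext'
      intro a s
      rfl
    have hφ : Function.Injective φ := by
      have h2 := Module.Flat.rTensor_preserves_injective_linearMap
        (M := S) (IsScalarTower.toAlgHom R A K).toLinearMap hlin
      intro a b hab
      apply h2
      rw [← LinearMap.congr_fun hφeq a, ← LinearMap.congr_fun hφeq b]
      exact hab
    haveI : NoZeroDivisors (K ⊗[R] S) := by exact IsDomain.to_noZeroDivisors (K ⊗[R] S)
    haveI : NoZeroDivisors (A ⊗[R] S) :=
      Function.Injective.noZeroDivisors φ hφ (map_zero φ) (map_mul φ)
    let E : (MvPolynomial (Fin n) S ⧸ Q.map (MvPolynomial.map (algebraMap R S))) ≃+* (A ⊗[R] S) :=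
      lemmaB Q
    haveI : NoZeroDivisors (MvPolynomial (Fin n) S ⧸ Q.map (MvPolynomial.map (algebraMap R S))) :=
      Function.Injective.noZeroDivisors E E.injective (map_zero E) (map_mul E)
    by_cases htop : Q.map (MvPolynomial.map (algebraMap R S)) = ⊤
    · exact Or.inr htop
    · left
      haveI : Nontrivial (MvPolynomial (Fin n) S ⧸ Q.map (MvPolynomial.map (algebraMap R S))) :=
        Ideal.Quotient.nontrivial_iff.mpr htop
      haveI : IsDomain (MvPolynomial (Fin n) S ⧸ Q.map (MvPolynomial.map (algebraMap R S))) :=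
        NoZeroDivisors.to_isDomain _
      exact (Ideal.Quotient.isDomain_iff_prime _).1 this
end

section
/- Let R be a commutative ring and S an R-module such that (i) for every f ∈ R, the annihilator of f in S equals (Ann_R f)·S, and (ii) for every pair of ideals I, J of R, IS ∩ JS = (I ∩ J)S. Then S is a flat R-module. -/
open Submodule TensorProduct LinearMap

section Aux

variable {R : Type*} [CommRing R] (S : Type*) [AddCommGroup S] [Module R S]

private noncomputable def muAux (I : Ideal R) : (↥I) ⊗[R] S →ₗ[R] S :=
  TensorProduct.lift ((LinearMap.lsmul R S).comp I.subtype)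

private lemma muAux_tmul (I : Ideal R) (i : I) (t : S) :
    muAux S I (i ⊗ₜ t) = (i : R) • t := rfl

private lemma muAux_comp (J I : Ideal R) (h : J ≤ I) :
    (muAux S I).comp (LinearMap.rTensor S (Submodule.inclusion h)) = muAux S J := by
  ext j t
  simp [muAux_tmul]

private lemma muAux_range (J : Ideal R) (y : (↥J) ⊗[R] S) :
    muAux S J y ∈ J • (⊤ : Submodule R S) := by
  induction y using TensorProduct.induction_on with
  | zero => simp
  | tmul j t => rw [muAux_tmul]; exact Submodule.smul_mem_smul j.2 trivial
  | add a b ha hb => rw [map_add]; exact Submodule.add_mem _ ha hb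

private lemma keyAux
    (h1 : ∀ f : R,
      Submodule.torsionBy R S f = (Submodule.torsionBy R R f : Ideal R) • (⊤ : Submodule R S))
    (h2 : ∀ I J : Ideal R,
      (I • (⊤ : Submodule R S)) ⊓ (J • (⊤ : Submodule R S)) = (I ⊓ J) • (⊤ : Submodule R S))
    (J : Ideal R) (f : R) (s : S) (hs : f • s ∈ J • (⊤ : Submodule R S)) :
    s ∈ (J.colon (Ideal.span {f})) • (⊤ : Submodule R S) := by
  set K := J.colon (Ideal.span {f}) with hK
  have hfs : f • s ∈ ((Ideal.span {f} ⊓ J) : Ideal R) • (⊤ : Submodule R S) := by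
    rw [← h2]
    exact ⟨Submodule.smul_mem_smul (Ideal.mem_span_singleton_self f) trivial, hs⟩
  have hmap : ((Ideal.span {f} ⊓ J) : Ideal R) • (⊤ : Submodule R S) ≤
      Submodule.map (LinearMap.lsmul R S f) (K • (⊤ : Submodule R S)) := by
    refine Submodule.smul_le.2 fun a ha t _ => ?_
    obtain ⟨b, rfl⟩ := Ideal.mem_span_singleton'.1 ha.1
    refine ⟨b • t, Submodule.smul_mem_smul ?_ trivial, ?_⟩
    · exact Submodule.mem_colon_span_singleton.2 (by simpa [mul_comm] using ha.2)
    · simp [smul_smul, mul_comm]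
  obtain ⟨s₀, hs₀, hfs₀⟩ := hmap hfs
  have htor : s - s₀ ∈ Submodule.torsionBy R S f := by
    simp only [Submodule.mem_torsionBy_iff, smul_sub]
    simp only [LinearMap.lsmul_apply] at hfs₀
    rw [hfs₀]; abel
  rw [h1] at htor
  have hann : ((Submodule.torsionBy R R f : Ideal R)) ≤ K := by
    intro a ha
    rw [Submodule.mem_torsionBy_iff] at ha
    refine Submodule.mem_colon_span_singleton.2 ?_
    simp only [smul_eq_mul] at ha ⊢
    rw [mul_comm] at ha
    simp [ha]
  have h3 : s - s₀ ∈ K • (⊤ : Submodule R S) := Submodule.smul_mono_left hann htor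
  have h4 := Submodule.add_mem _ h3 hs₀
  simpa using h4

private lemma stepAux
    (h1 : ∀ f : R,
      Submodule.torsionBy R S f = (Submodule.torsionBy R R f : Ideal R) • (⊤ : Submodule R S))
    (h2 : ∀ I J : Ideal R,
      (I • (⊤ : Submodule R S)) ⊓ (J • (⊤ : Submodule R S)) = (I ⊓ J) • (⊤ : Submodule R S))
    (J : Ideal R) (f : R) (hJ : Function.Injective (muAux S J)) :
    Function.Injective (muAux S (Ideal.span {f} ⊔ J)) := by
  set I : Ideal R := Ideal.span {f} ⊔ J with hI
  have hle : J ≤ I := le_sup_right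
  have hfI : f ∈ I := Submodule.mem_sup_left (Ideal.mem_span_singleton_self f)
  set fI : I := ⟨f, hfI⟩ with hfIdef
  set ι : (↥J) →ₗ[R] (↥I) := Submodule.inclusion hle with hι
  -- decomposition
  have hdec : ∀ x : (↥I) ⊗[R] S, ∃ y : (↥J) ⊗[R] S, ∃ s : S,
      x = LinearMap.rTensor S ι y + fI ⊗ₜ s := by
    intro x
    induction x using TensorProduct.induction_on with
    | zero => exact ⟨0, 0, by simp⟩
    | tmul i t =>
      have hi2 : (i : R) ∈ Ideal.span {f} ⊔ J := i.2
      obtain ⟨a, ha, b, hb, hab⟩ := Submodule.mem_sup.1 hi2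
      obtain ⟨c, rfl⟩ := Ideal.mem_span_singleton'.1 ha
      refine ⟨(⟨b, hb⟩ : J) ⊗ₜ t, c • t, ?_⟩
      have hi : i = ι ⟨b, hb⟩ + c • fI := by
        apply Subtype.ext
        simp only [Submodule.coe_add, SetLike.val_smul, smul_eq_mul]
        rw [← hab]
        simp [hι, Submodule.coe_inclusion, hfIdef]
        ring
      rw [LinearMap.rTensor_tmul, hi, add_tmul, TensorProduct.smul_tmul]
    | add a b ha hb =>
      obtain ⟨y1, s1, rfl⟩ := ha
      obtain ⟨y2, s2, rfl⟩ := hb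
      exact ⟨y1 + y2, s1 + s2, by rw [map_add, TensorProduct.tmul_add]; abel⟩
  rw [injective_iff_map_eq_zero] at hJ ⊢
  intro x hx
  obtain ⟨y, s, rfl⟩ := hdec x
  have hmu : f • s = - muAux S J y := by
    have h6 := hx
    rw [map_add, ← LinearMap.comp_apply, muAux_comp S J I hle] at h6
    have h5 : muAux S I (fI ⊗ₜ s) = f • s := muAux_tmul S I fI s
    rw [h5] at h6
    rw [eq_neg_iff_add_eq_zero, add_comm]
    exact h6
  have hsmem : f • s ∈ J • (⊤ : Submodule R S) := by
    rw [hmu]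
    exact Submodule.neg_mem _ (muAux_range S J y)
  have hsK : s ∈ (J.colon (Ideal.span {f})) • (⊤ : Submodule R S) :=
    keyAux S h1 h2 J f s hsmem
  have hrange : fI ⊗ₜ[R] s ∈ LinearMap.range (LinearMap.rTensor S ι) := by
    refine Submodule.smul_induction_on hsK ?_ ?_
    · intro r hr u _
      refine ⟨(⟨r * f, ?_⟩ : J) ⊗ₜ u, ?_⟩
      · have := Submodule.mem_colon_span_singleton.1 hr
        simpa using this
      · rw [LinearMap.rTensor_tmul]
        rw [← TensorProduct.smul_tmul]
        congr 1
    · intro u v hu hv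
      rw [TensorProduct.tmul_add]
      exact Submodule.add_mem _ hu hv
  obtain ⟨z, hz⟩ := hrange
  rw [← hz, ← map_add] at hx ⊢
  rw [← LinearMap.comp_apply, muAux_comp S J I hle] at hx
  rw [hJ _ hx, map_zero]

end Aux

theorem flat_of_annihilator_and_ideal_intersection_conditions
    {R : Type*} [CommRing R] (S : Type*) [AddCommGroup S] [Module R S]
    (h1 : ∀ f : R,
      Submodule.torsionBy R S f = (Submodule.torsionBy R R f : Ideal R) • (⊤ : Submodule R S))
    (h2 : ∀ I J : Ideal R,
      (I • (⊤ : Submodule R S)) ⊓ (J • (⊤ : Submodule R S)) = (I ⊓ J) • (⊤ : Submodule R S)) :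
    Module.Flat R S := by
  refine Module.Flat.iff_lift_lsmul_comp_subtype_injective.2 fun I hI => ?_
  obtain ⟨T, rfl⟩ := hI
  show Function.Injective (muAux S (Submodule.span R (T : Set R)))
  classical
  induction T using Finset.induction_on with
  | empty =>
    rw [Finset.coe_empty, Submodule.span_empty]
    exact Function.injective_of_subsingleton _
  | @insert f T' hf ih =>
    rw [Finset.coe_insert, Submodule.span_insert]
    exact stepAux S h1 h2 (Submodule.span R (T' : Set R)) f ih
end

section
/- Let R be a commutative ring and S an R-module such that for every pair of submodules M₁, M₂ of R² (the free module of rank 2), the images of S ⊗_R M₁ and S ⊗_R M₂ in S ⊗_R R² satisfy (image of S ⊗_R (M₁ ∩ M₂)) = (image of S ⊗_R M₁) ∩ (image of S ⊗_R M₂). Then S is a flat R-module. -/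
open TensorProduct

private lemma exists_fin_rep {R : Type*} [CommRing R] {M N : Type*} [AddCommGroup M] [Module R M]
    [AddCommGroup N] [Module R N] (x : M ⊗[R] N) :
    ∃ (k : ℕ) (m : Fin k → M) (n : Fin k → N), x = ∑ i, m i ⊗ₜ[R] n i := by
  obtain ⟨s, rfl⟩ := TensorProduct.exists_finset x
  refine ⟨s.card, fun i => (s.equivFin.symm i).1.1, fun i => (s.equivFin.symm i).1.2, ?_⟩
  rw [← Finset.sum_attach s (fun p => p.1 ⊗ₜ[R] p.2)]
  exact Fintype.sum_equiv s.equivFin _ _ (fun p => by simp)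

private lemma key_lemma {R : Type*} [CommRing R] {S : Type*} [AddCommGroup S] [Module R S]
    (h : ∀ M₁ M₂ : Submodule R (R × R),
      LinearMap.range (LinearMap.lTensor S (M₁ ⊓ M₂).subtype) =
        LinearMap.range (LinearMap.lTensor S M₁.subtype) ⊓
          LinearMap.range (LinearMap.lTensor S M₂.subtype)) :
    ∀ (n : ℕ) (a : Fin n → R) (s : Fin n → S), ∑ i, a i • s i = 0 →
      ∃ (m : ℕ) (b : Fin n → Fin m → R) (t : Fin m → S),
        (∀ i, s i = ∑ j, b i j • t j) ∧ ∀ j, ∑ i, a i * b i j = 0 := by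
  intro n
  induction n with
  | zero =>
    intro a s _
    exact ⟨0, fun i => i.elim0, fun j => j.elim0, fun i => i.elim0, fun j => j.elim0⟩
  | succ n ih =>
    intro a s hrel
    rw [Fin.sum_univ_succ] at hrel
    have hrel' : ∑ i : Fin n, a i.succ • s i.succ = -(a 0 • s 0) := by
      rw [eq_neg_iff_add_eq_zero, add_comm]; exact hrel
    set I : Submodule R R := Submodule.span R (Set.range fun i : Fin n => a i.succ) with hI
    set M₁ : Submodule R (R × R) := Submodule.span R {((1 : R), a 0)} with hM₁
    set M₂ : Submodule R (R × R) := Submodule.prod ⊤ I with hM₂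
    set z : S ⊗[R] (R × R) := s 0 ⊗ₜ[R] ((1 : R), a 0) with hz
    have mem1 : z ∈ LinearMap.range (LinearMap.lTensor S M₁.subtype) :=
      ⟨s 0 ⊗ₜ[R] ⟨((1 : R), a 0), Submodule.mem_span_singleton_self _⟩, rfl⟩
    have mem2 : z ∈ LinearMap.range (LinearMap.lTensor S M₂.subtype) := by
      refine ⟨s 0 ⊗ₜ[R] ⟨((1 : R), (0 : R)), Submodule.mem_prod.mpr ⟨trivial, I.zero_mem⟩⟩
        - ∑ i : Fin n, s i.succ ⊗ₜ[R] ⟨((0 : R), a i.succ),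
            Submodule.mem_prod.mpr ⟨trivial, Submodule.subset_span ⟨i, rfl⟩⟩⟩, ?_⟩
      rw [map_sub, map_sum]
      simp only [LinearMap.lTensor_tmul, Submodule.coe_subtype]
      have e1 : ∑ i : Fin n, s i.succ ⊗ₜ[R] ((0 : R), a i.succ)
          = -(s 0 ⊗ₜ[R] ((0 : R), a 0)) := by
        have e2 : ∀ i : Fin n, s i.succ ⊗ₜ[R] ((0 : R), a i.succ)
            = (a i.succ • s i.succ) ⊗ₜ[R] ((0 : R), (1 : R)) := by
          intro i
          have hp : ((0 : R), a i.succ) = a i.succ • ((0 : R), (1 : R)) := by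
            simp [Prod.ext_iff]
          rw [hp, TensorProduct.tmul_smul, TensorProduct.smul_tmul']
        have e3 : s 0 ⊗ₜ[R] ((0 : R), a 0)
            = (a 0 • s 0) ⊗ₜ[R] ((0 : R), (1 : R)) := by
          have hp : ((0 : R), a 0) = a 0 • ((0 : R), (1 : R)) := by
            simp [Prod.ext_iff]
          rw [hp, TensorProduct.tmul_smul, TensorProduct.smul_tmul']
        rw [Finset.sum_congr rfl (fun i _ => e2 i), ← TensorProduct.sum_tmul, hrel',
          TensorProduct.neg_tmul, e3]
      rw [e1, sub_neg_eq_add, ← TensorProduct.tmul_add]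
      rw [hz]
      have hp : ((1 : R), (0 : R)) + ((0 : R), a 0) = ((1 : R), a 0) := by
        simp [Prod.ext_iff]
      rw [hp]
    have memz : z ∈ LinearMap.range (LinearMap.lTensor S (M₁ ⊓ M₂).subtype) := by
      rw [h M₁ M₂]; exact ⟨mem1, mem2⟩
    obtain ⟨w, hw⟩ := memz
    obtain ⟨m, t, p, hwrep⟩ := exists_fin_rep w
    have hzrep : z = ∑ j, t j ⊗ₜ[R] ((p j : R × R)) := by
      rw [← hw, hwrep, map_sum]
      simp only [LinearMap.lTensor_tmul, Submodule.coe_subtype]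
    have hx : ∀ j, ∃ xj : R, xj • ((1 : R), a 0) = (p j : R × R) :=
      fun j => Submodule.mem_span_singleton.mp (p j).2.1
    choose x hx using hx
    have hpval : ∀ j, (p j : R × R) = (x j, x j * a 0) := by
      intro j
      rw [← hx j]
      ext <;> simp [mul_comm]
    have hc : ∀ j, ∃ c : Fin n → R, ∑ i, c i • a i.succ = x j * a 0 := by
      intro j
      have h2 : ((p j : R × R)).2 ∈ I := (Submodule.mem_prod.mp (p j).2.2).2
      rw [hI, Submodule.mem_span_range_iff_exists_fun] at h2
      obtain ⟨c, hc⟩ := h2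
      exact ⟨c, by rw [hc, hpval j]⟩
    choose c hc using hc
    -- the projection onto the first coordinate
    set π : S ⊗[R] (R × R) →ₗ[R] S :=
      (TensorProduct.rid R S).toLinearMap ∘ₗ (LinearMap.lTensor S (LinearMap.fst R R R)) with hπ
    have hπ' : ∀ (u : S) (q : R × R), π (u ⊗ₜ[R] q) = q.1 • u := by
      intro u q; simp [hπ]
    have hs0 : s 0 = ∑ j, x j • t j := by
      have := congrArg π hzrep
      rw [hz, hπ', map_sum] at this
      simp only [hπ', hpval] at this
      simpa using this
    have hrel2 : ∑ i : Fin n, a i.succ • (s i.succ + ∑ j, c j i • t j) = 0 := by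
      have swap : ∑ i : Fin n, a i.succ • (∑ j, c j i • t j)
          = ∑ j, (x j * a 0) • t j := by
        simp only [Finset.smul_sum, smul_smul]
        rw [Finset.sum_comm]
        refine Finset.sum_congr rfl fun j _ => ?_
        rw [← Finset.sum_smul]
        congr 1
        rw [← hc j]
        exact Finset.sum_congr rfl fun i _ => by rw [smul_eq_mul, mul_comm]
      simp only [smul_add, Finset.sum_add_distrib, swap, hrel']
      have : ∑ j, (x j * a 0) • t j = a 0 • s 0 := by
        rw [hs0, Finset.smul_sum]
        exact Finset.sum_congr rfl fun j _ => by rw [smul_smul, mul_comm]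
      rw [this]
      abel
    obtain ⟨m', b', t', hbt', hcol'⟩ :=
      ih (fun i => a i.succ) (fun i => s i.succ + ∑ j, c j i • t j) hrel2
    refine ⟨m + m',
      fun i => Fin.cases (Fin.addCases (fun j => x j) (fun _ => 0))
        (fun i' => Fin.addCases (fun j => -(c j i')) (fun k => b' i' k)) i,
      Fin.addCases t t', ?_, ?_⟩
    · intro i
      refine Fin.cases ?_ ?_ i
      · rw [Fin.sum_univ_add]
        simp only [Fin.cases_zero, Fin.addCases_left, Fin.addCases_right]
        simpa using hs0
      · intro i'
        rw [Fin.sum_univ_add]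
        simp only [Fin.cases_succ, Fin.addCases_left, Fin.addCases_right]
        have h1 := hbt' i'
        rw [show (∑ j, -(c j i') • t j) = -(∑ j, c j i' • t j) by
          simp [neg_smul, Finset.sum_neg_distrib]]
        rw [← h1]
        abel
    · intro j
      refine Fin.addCases ?_ ?_ j
      · intro j0
        rw [Fin.sum_univ_succ]
        simp only [Fin.cases_zero, Fin.cases_succ, Fin.addCases_left]
        have h2 : ∑ i : Fin n, a i.succ * -(c j0 i) = -(x j0 * a 0) := by
          rw [← hc j0, ← Finset.sum_neg_distrib]
          exact Finset.sum_congr rfl fun i _ => by rw [smul_eq_mul]; ring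
        rw [h2]
        ring
      · intro k0
        rw [Fin.sum_univ_succ]
        simp only [Fin.cases_zero, Fin.cases_succ, Fin.addCases_right, mul_zero, zero_add]
        exact hcol' k0

theorem flat_of_finite_intersection_condition_on_rank_two
    {R : Type*} [CommRing R] (S : Type*) [AddCommGroup S] [Module R S]
    (h : ∀ M₁ M₂ : Submodule R (R × R),
      LinearMap.range (LinearMap.lTensor S (M₁ ⊓ M₂).subtype) =
        LinearMap.range (LinearMap.lTensor S M₁.subtype) ⊓
          LinearMap.range (LinearMap.lTensor S M₂.subtype)) :
    Module.Flat R S := by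
  rw [Module.Flat.iff_rTensor_injective']
  intro I
  rw [← LinearMap.ker_eq_bot, eq_bot_iff]
  intro z hz
  rw [LinearMap.mem_ker] at hz
  obtain ⟨k, q, sv, rfl⟩ := exists_fin_rep z
  rw [map_sum] at hz
  simp only [LinearMap.rTensor_tmul, Submodule.coe_subtype] at hz
  have hrel : ∑ i, ((q i : R)) • sv i = 0 := by
    have := congrArg (TensorProduct.lid R S) hz
    rw [map_sum, map_zero] at this
    simpa using this
  obtain ⟨m, b, t, hbt, hcol⟩ := key_lemma h k (fun i => (q i : R)) sv hrel
  have : ∑ i, q i ⊗ₜ[R] sv i = (0 : I ⊗[R] S) := by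
    calc ∑ i, q i ⊗ₜ[R] sv i = ∑ i, ∑ j, (b i j • q i) ⊗ₜ[R] t j := by
          refine Finset.sum_congr rfl fun i _ => ?_
          rw [hbt i, TensorProduct.tmul_sum]
          exact Finset.sum_congr rfl fun j _ => by
            rw [TensorProduct.tmul_smul, TensorProduct.smul_tmul']
      _ = ∑ j, (∑ i, b i j • q i) ⊗ₜ[R] t j := by
          rw [Finset.sum_comm]
          exact Finset.sum_congr rfl fun j _ => by rw [TensorProduct.sum_tmul]
      _ = 0 := by
          refine Finset.sum_eq_zero fun j _ => ?_
          have : (∑ i, b i j • q i) = (0 : I) := by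
            ext
            push_cast
            simpa [mul_comm] using hcol j
          rw [this, TensorProduct.zero_tmul]
  rw [this]
  exact Submodule.zero_mem ⊥
end

section
/- Let R be a Noetherian commutative ring and {S_μ} an arbitrary family of R-modules each of which is intersection flat. Then the product ∏_μ S_μ is intersection flat over R. -/
/-- An `R`-module `S` is intersection flat if it is flat and tensoring with `S` commutes with
arbitrary intersections of families of submodules of any finitely generated module. -/
def IntersectionFlat (R : Type u) (S : Type v) [CommRing R] [AddCommGroup S]
    [Module R S] : Prop :=
  Module.Flat R S ∧
    ∀ (M : Type u) (_ : AddCommGroup M) (_ : Module R M) (_ : Module.Finite R M)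
      (ι : Type u) (Mf : ι → Submodule R M),
      LinearMap.range (LinearMap.lTensor S (⨅ l, Mf l).subtype) =
        ⨅ l, LinearMap.range (LinearMap.lTensor S (Mf l).subtype)

open TensorProduct LinearMap Function

section Aux

variable (R : Type u) [CommRing R] {μ : Type w} (S : μ → Type v)
  [∀ i, AddCommGroup (S i)] [∀ i, Module R (S i)]

/-- The canonical map `(∏ᵢ Sᵢ) ⊗ M → ∏ᵢ (Sᵢ ⊗ M)`. -/
noncomputable def psiAux (M : Type u₁) [AddCommGroup M] [Module R M] :
    ((∀ i, S i) ⊗[R] M) →ₗ[R] ∀ i, (S i) ⊗[R] M :=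
  TensorProduct.lift
  { toFun := fun s => LinearMap.pi fun i => TensorProduct.mk R (S i) M (s i)
    map_add' := fun a b => by ext m i; simp [TensorProduct.add_tmul]
    map_smul' := fun r a => by ext m i; simp [TensorProduct.smul_tmul'] }

@[simp] lemma psiAux_tmul {M : Type u₁} [AddCommGroup M] [Module R M]
    (s : ∀ i, S i) (m : M) : psiAux R S M (s ⊗ₜ m) = fun i => (s i) ⊗ₜ m := rfl

/-- The product of the maps `lTensor (S i) f`. -/
noncomputable def phiAux {M : Type u₁} [AddCommGroup M] [Module R M]
    {N : Type u₂} [AddCommGroup N] [Module R N] (f : M →ₗ[R] N) :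
    (∀ i, (S i) ⊗[R] M) →ₗ[R] ∀ i, (S i) ⊗[R] N :=
  LinearMap.pi fun i => (lTensor (S i) f) ∘ₗ LinearMap.proj i

@[simp] lemma phiAux_apply {M : Type u₁} [AddCommGroup M] [Module R M]
    {N : Type u₂} [AddCommGroup N] [Module R N] (f : M →ₗ[R] N)
    (x : ∀ i, (S i) ⊗[R] M) (i : μ) :
    phiAux R S f x i = lTensor (S i) f (x i) := rfl

lemma psi_nat {M : Type u₁} [AddCommGroup M] [Module R M]
    {N : Type u₂} [AddCommGroup N] [Module R N] (f : M →ₗ[R] N) :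
    (phiAux R S f) ∘ₗ psiAux R S M = (psiAux R S N) ∘ₗ lTensor (∀ i, S i) f := by
  apply TensorProduct.ext'
  intro s m
  funext i
  simp

lemma psi_nat_apply {M : Type u₁} [AddCommGroup M] [Module R M]
    {N : Type u₂} [AddCommGroup N] [Module R N] (f : M →ₗ[R] N)
    (x : (∀ i, S i) ⊗[R] M) :
    phiAux R S f (psiAux R S M x) = psiAux R S N (lTensor (∀ i, S i) f x) :=
  LinearMap.congr_fun (psi_nat R S f) x

lemma range_phiAux {M : Type u₁} [AddCommGroup M] [Module R M]
    {N : Type u₂} [AddCommGroup N] [Module R N] (f : M →ₗ[R] N) :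
    LinearMap.range (phiAux R S f) =
      Submodule.pi Set.univ (fun i => LinearMap.range (lTensor (S i) f)) := by
  ext y
  simp only [LinearMap.mem_range, Submodule.mem_pi, Set.mem_univ, forall_true_left]
  constructor
  · rintro ⟨x, rfl⟩ i
    exact ⟨x i, rfl⟩
  · intro h
    choose x hx using h
    exact ⟨x, funext fun i => hx i⟩

lemma psi_bij_pi_fin (ι : Type u₂) [Fintype ι] : Bijective (psiAux R S (ι → R)) := by
  classical
  set e := TensorProduct.piScalarRight R R (∀ i, S i) ι with he
  set ei := fun i => TensorProduct.piScalarRight R R (S i) ι with hei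
  have key : ∀ (x : (∀ i, S i) ⊗[R] (ι → R)) (i : μ) (j : ι),
      ei i ((psiAux R S (ι → R) x) i) j = e x j i := by
    intro x
    induction x using TensorProduct.induction_on with
    | zero => simp
    | tmul s g => intro i j; simp [he, hei]
    | add a b ha hb => intro i j; simp only [map_add, Pi.add_apply, ha, hb]
  constructor
  · intro a b hab
    apply e.injective
    funext j i
    rw [← key, ← key, hab]
  · intro y
    refine ⟨e.symm (fun j i => ei i (y i) j), ?_⟩
    funext i
    apply (ei i).injective
    funext j
    rw [key]
    simp

lemma psi_bij_congr {M : Type u₁} [AddCommGroup M] [Module R M]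
    {N : Type u₂} [AddCommGroup N] [Module R N] (e : M ≃ₗ[R] N)
    (h : Bijective (psiAux R S M)) : Bijective (psiAux R S N) := by
  have hl : Bijective (lTensor (∀ i, S i) (e : M →ₗ[R] N)) :=
    (LinearEquiv.lTensor (∀ i, S i) e).bijective
  have hphi : Bijective (phiAux R S (e : M →ₗ[R] N)) := by
    constructor
    · intro a b hab
      funext i
      exact (LinearEquiv.lTensor (S i) e).injective (congrFun hab i)
    · intro y
      refine ⟨fun i => (LinearEquiv.lTensor (S i) e).symm (y i), ?_⟩
      funext i
      simp only [phiAux_apply]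
      exact (LinearEquiv.lTensor (S i) e).apply_symm_apply (y i)
  have hcomp : Bijective (psiAux R S N ∘ lTensor (∀ i, S i) (e : M →ₗ[R] N)) := by
    have : (psiAux R S N) ∘ (lTensor (∀ i, S i) (e : M →ₗ[R] N))
        = (phiAux R S (e : M →ₗ[R] N)) ∘ (psiAux R S M) := by
      funext x
      exact (psi_nat_apply R S (e : M →ₗ[R] N) x).symm
    rw [this]
    exact hphi.comp h
  exact (Function.Bijective.of_comp_iff _ hl).mp hcomp

lemma psi_bij_of_free (L : Type u) [AddCommGroup L] [Module R L]
    [Module.Free R L] [Module.Finite R L] : Bijective (psiAux R S L) :=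
  psi_bij_congr R S (Module.Basis.equivFun (Module.Free.chooseBasis R L)).symm
    (psi_bij_pi_fin R S _)

lemma psi_bij_of_fp (M : Type u) [AddCommGroup M] [Module R M]
    [Module.FinitePresentation R M] : Bijective (psiAux R S M) := by
  obtain ⟨L, _, _, K, e, hfree, hfin, hK⟩ := Module.FinitePresentation.equiv_quotient R M
  refine psi_bij_congr R S e.symm ?_
  obtain ⟨n, v, hv⟩ := Submodule.fg_iff_exists_fin_generating_family.mp hK
  set f : (Fin n → R) →ₗ[R] L := Fintype.linearCombination R v with hf
  set π : L →ₗ[R] L ⧸ K := K.mkQ with hπdef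
  have hr : LinearMap.range f = K := by
    rw [hf, Fintype.range_linearCombination, hv]
  have hexact : Function.Exact f π := by
    rw [LinearMap.exact_iff, hπdef, Submodule.ker_mkQ, hr]
  have hπ : Surjective π := Submodule.mkQ_surjective K
  have hfreeL : Bijective (psiAux R S L) := psi_bij_of_free R S L
  have hfreeFin : Bijective (psiAux R S (Fin n → R)) := psi_bij_pi_fin R S (Fin n)
  constructor
  · rw [injective_iff_map_eq_zero]
    intro x hx
    obtain ⟨u, rfl⟩ := LinearMap.lTensor_surjective (∀ i, S i) hπ x
    have h1 : ∀ i, lTensor (S i) π ((psiAux R S L u) i) = 0 := by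
      intro i
      have h2 := psi_nat_apply R S π u
      have h3 := congrFun h2 i
      rw [phiAux_apply] at h3
      rw [h3, hx]
      rfl
    have h2 : ∀ i, ∃ w, lTensor (S i) f w = (psiAux R S L u) i := fun i =>
      (lTensor_exact (S i) hexact hπ ((psiAux R S L u) i)).mp (h1 i)
    choose w hw using h2
    obtain ⟨v', hv'⟩ := hfreeFin.surjective w
    have heq : psiAux R S L (lTensor (∀ i, S i) f v') = psiAux R S L u := by
      rw [← psi_nat_apply]
      funext i
      rw [phiAux_apply, hv']
      exact hw i
    have hu : lTensor (∀ i, S i) f v' = u := hfreeL.injective heq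
    rw [← hu, ← lTensor_comp_apply]
    have hcomp : π ∘ₗ f = 0 := by
      refine LinearMap.ext fun x => ?_
      have hfx : f x ∈ K := hr ▸ LinearMap.mem_range_self f x
      simp [hπdef, Submodule.Quotient.mk_eq_zero, hfx]
    rw [hcomp]
    simp
  · intro y
    choose z hz using fun i => LinearMap.lTensor_surjective (S i) hπ (y i)
    obtain ⟨u, hu⟩ := hfreeL.surjective z
    refine ⟨lTensor (∀ i, S i) π u, ?_⟩
    rw [← psi_nat_apply]
    funext i
    rw [phiAux_apply, hu]
    exact hz i

lemma map_psi_range {M : Type u₁} [AddCommGroup M] [Module R M]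
    {N : Type u₂} [AddCommGroup N] [Module R N] (f : N →ₗ[R] M)
    (hN : Surjective (psiAux R S N)) :
    Submodule.map (psiAux R S M) (LinearMap.range (lTensor (∀ i, S i) f)) =
      Submodule.pi Set.univ (fun i => LinearMap.range (lTensor (S i) f)) := by
  rw [← LinearMap.range_comp, ← psi_nat, LinearMap.range_comp,
    LinearMap.range_eq_top.mpr hN, Submodule.map_top, range_phiAux]

end Aux

theorem intersectionFlat_pi {R : Type u} [CommRing R] [IsNoetherianRing R]
    {μ : Type w} (S : μ → Type v) [∀ i, AddCommGroup (S i)] [∀ i, Module R (S i)]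
    (hS : ∀ i, IntersectionFlat R (S i)) :
    IntersectionFlat R (∀ i, S i) := by
  constructor
  · rw [Module.Flat.iff_lTensor_injective']
    intro I
    haveI : Module.Finite R I := Module.Finite.iff_fg.mpr (IsNoetherian.noetherian I)
    haveI : Module.FinitePresentation R I := Module.finitePresentation_of_finite R I
    intro x y hxy
    have h1 := congrArg (psiAux R S R) hxy
    rw [← psi_nat_apply, ← psi_nat_apply] at h1
    have hinj : Injective (phiAux R S I.subtype) := by
      intro a b hab
      funext i
      exact (Module.Flat.iff_lTensor_injective' (R := R) (M := S i)).mp (hS i).1 I (congrFun hab i)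
    exact (psi_bij_of_fp R S I).injective (hinj h1)
  · intro M _ _ _ ι Mf
    haveI : IsNoetherian R M := isNoetherian_of_isNoetherianRing_of_finite R M
    haveI : ∀ N : Submodule R M, Module.Finite R N := fun N =>
      Module.Finite.iff_fg.mpr (IsNoetherian.noetherian N)
    haveI : ∀ N : Submodule R M, Module.FinitePresentation R N := fun N =>
      Module.finitePresentation_of_finite R N
    haveI : Module.FinitePresentation R M := Module.finitePresentation_of_finite R M
    have hΨ := psi_bij_of_fp R S M
    apply Submodule.map_injective_of_injective hΨ.injective
    have hmap : ∀ N : Submodule R M,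
        Submodule.map (psiAux R S M) (LinearMap.range (lTensor (∀ i, S i) N.subtype)) =
          Submodule.pi Set.univ (fun i => LinearMap.range (lTensor (S i) N.subtype)) :=
      fun N => map_psi_range R S N.subtype (psi_bij_of_fp R S N).surjective
    rw [hmap]
    set e := LinearEquiv.ofBijective (psiAux R S M) hΨ with he
    have hmapInf : Submodule.map (psiAux R S M)
        (⨅ l, LinearMap.range (lTensor (∀ i, S i) (Mf l).subtype)) =
        ⨅ l, Submodule.map (psiAux R S M)
          (LinearMap.range (lTensor (∀ i, S i) (Mf l).subtype)) := by
      have hcoe : psiAux R S M = (e : (∀ i, S i) ⊗[R] M →ₗ[R] ∀ i, (S i) ⊗[R] M) := rfl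
      rw [hcoe]
      rw [Submodule.map_equiv_eq_comap_symm, Submodule.comap_iInf]
      simp_rw [← Submodule.map_equiv_eq_comap_symm]
    rw [hmapInf]
    simp_rw [hmap]
    have hSi : ∀ i, LinearMap.range (lTensor (S i) (⨅ l, Mf l).subtype) =
        ⨅ l, LinearMap.range (lTensor (S i) (Mf l).subtype) :=
      fun i => (hS i).2 M inferInstance inferInstance inferInstance ι Mf
    ext x
    simp only [Submodule.mem_pi, Set.mem_univ, forall_true_left, Submodule.mem_iInf, hSi]
    exact ⟨fun h l i => h i l, fun h i l => h l i⟩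
end
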